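/- arXiv:1803.00540 — 4 statements merged into one kernel-verified Lean document; each statement's English description precedes it below -/
import Mathlib

section
/- For any permutation x in the alternating group A_N (N ≥ 3), the minimal number of 3-cycles needed to write x as a product of 3-cycles equals (N - ocyc(x))/2, where ocyc(x) is the number of odd cycles of x (counting fixed points as cycles of length 1). -/
open Equiv Equiv.Perm

/-- The word length of `x` with respect to a generating set `T`. -/
noncomputable def lenT {G : Type*} [Group G] (T : Set G) (x : G) : ℕ :=
  sInf {n | ∃ l : List G, (∀ t ∈ l, t ∈ T) ∧ l.prod = x ∧ l.length = n}

/-- The `T`-prefix order. -/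
def leT {G : Type*} [Group G] (T : Set G) (x y : G) : Prop :=
  lenT T y = lenT T x + lenT T (x⁻¹ * y)

/-- The set of 3-cycles of the symmetric group on `Fin N`. -/
def threeCycles (N : ℕ) : Set (Perm (Fin N)) := {σ | σ.IsThreeCycle}

/-- The set of transpositions of the symmetric group on `Fin N`. -/
def transpositions (N : ℕ) : Set (Perm (Fin N)) := {σ | σ.IsSwap}

/-- The number of odd cycles of a permutation, counting fixed points. -/
def ocyc {N : ℕ} (x : Perm (Fin N)) : ℕ :=
  (x.cycleType.filter (fun n => Odd n)).card + (N - x.cycleType.sum)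



/-- weight of a cycle length -/
def wtl (n : ℕ) : ℕ := n - n % 2

lemma wtl_odd {n : ℕ} (h : Odd n) : wtl n = n - 1 := by
  have := Nat.odd_iff.mp h; unfold wtl; omega
lemma wtl_even {n : ℕ} (h : Even n) : wtl n = n := by
  have := Nat.even_iff.mp h; unfold wtl; omega
lemma wtl_zero : wtl 0 = 0 := rfl
lemma wtl_one : wtl 1 = 0 := rfl
lemma wtl_le (n : ℕ) : wtl n ≤ n := by unfold wtl; omega

lemma wtl_add_le (p q : ℕ) : wtl p + wtl q ≤ wtl (p + q) := by
  unfold wtl; omega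

lemma wtl_add_odd (p q : ℕ) (hp : Odd p) (hq : Odd q) :
    wtl (p + q) = wtl p + wtl q + 2 := by
  have := Nat.odd_iff.mp hp; have := Nat.odd_iff.mp hq; unfold wtl; omega

lemma wtl_add_even (p q : ℕ) (hq : Even q) :
    wtl (p + q) = wtl p + wtl q := by
  have := Nat.even_iff.mp hq; unfold wtl; omega

lemma wtl_add_le' (p q : ℕ) : wtl (p + q) ≤ wtl p + wtl q + 2 := by
  unfold wtl; omega

section braid
variable {α : Type*} [DecidableEq α]

lemma swap_braid {a b c : α} (hab : a ≠ b) (hac : a ≠ c) (hbc : b ≠ c) :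
    swap a b * swap b c = swap a c * swap a b := by
  ext x
  simp only [Perm.mul_apply, swap_apply_def]
  split_ifs <;> simp_all

lemma isThreeCycle_swap_swap {a b c : α} [Fintype α] (hab : a ≠ b) (hac : a ≠ c) (hbc : b ≠ c) :
    (swap a b * swap b c).IsThreeCycle := by
  rw [swap_comm a b]
  exact isThreeCycle_swap_mul_swap_same (Ne.symm hab) hbc hac

/-- the merge/split identity -/
lemma formPerm_append (l1 l2 : List α) (h : (l1 ++ l2).Nodup)
    (h1 : l1 ≠ []) (h2 : l2 ≠ []) :
    (l1 ++ l2).formPerm = swap (l1.head h1) (l2.head h2) * (l1.formPerm * l2.formPerm) := by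
  induction l1 with
  | nil => simp at h1
  | cons a t ih =>
    rcases t with _ | ⟨b, t1⟩
    · rcases l2 with _ | ⟨c, t2⟩
      · simp at h2
      · simp only [List.singleton_append, List.formPerm_cons_cons, List.head_cons,
          List.formPerm_singleton, one_mul]
    · have h' : ((b :: t1) ++ l2).Nodup := by
        have := h; rw [List.cons_append, List.nodup_cons] at this; exact this.2
      have hmain := ih h' (by simp)
      have hanotin : a ∉ (b :: t1) ++ l2 := by
        have := h; rw [List.cons_append, List.nodup_cons] at this; exact this.1
      have hab : a ≠ b := by intro hh; exact hanotin (by simp [hh])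
      have hal2 : a ∉ l2 := fun hh => hanotin (by simp [hh])
      have hbl2 : b ∉ l2 := by
        have := h'; rw [List.cons_append, List.nodup_cons] at this
        exact fun hh => this.1 (by simp [hh])
      have hac : a ≠ l2.head h2 := fun hh => hal2 (hh ▸ List.head_mem h2)
      have hbc : b ≠ l2.head h2 := fun hh => hbl2 (hh ▸ List.head_mem h2)
      have e1 : ((a :: b :: t1) ++ l2).formPerm = swap a b * ((b :: t1) ++ l2).formPerm := by
        simp [List.cons_append, List.formPerm_cons_cons]
      rw [e1, hmain]
      have e2 : (a :: b :: t1).formPerm = swap a b * (b :: t1).formPerm :=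
        List.formPerm_cons_cons a b t1
      rw [List.head_cons] at *
      rw [e2]
      have hbr := swap_braid hab hac hbc
      calc swap a b * (swap b (l2.head h2) * ((b :: t1).formPerm * l2.formPerm))
          = (swap a b * swap b (l2.head h2)) * ((b :: t1).formPerm * l2.formPerm) := by group
        _ = (swap a (l2.head h2) * swap a b) * ((b :: t1).formPerm * l2.formPerm) := by rw [hbr]
        _ = swap a (l2.head h2) * (swap a b * (b :: t1).formPerm * l2.formPerm) := by group

end braid
section master
variable {α : Type*} [Fintype α] [DecidableEq α]

/-- total weight of a permutation -/
def wsum (y : Perm α) : ℕ := (y.cycleType.map wtl).sum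

lemma wsum_one : wsum (1 : Perm α) = 0 := by simp [wsum]

lemma wsum_mul_disjoint {f g : Perm α} (h : f.Disjoint g) :
    wsum (f * g) = wsum f + wsum g := by
  simp [wsum, h.cycleType_mul]

/-- length of the cycle through a point (1 for fixed points) -/
def Lc (y : Perm α) (u : α) : ℕ := if y u = u then 1 else (y.cycleOf u).support.card

/-- the cycle through a point, as a list -/
def clist (y : Perm α) (u : α) : List α := if y u = u then [u] else y.toList u

lemma clist_nodup (y : Perm α) (u : α) : (clist y u).Nodup := by
  unfold clist; split
  · simp
  · exact nodup_toList y u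

lemma clist_length (y : Perm α) (u : α) : (clist y u).length = Lc y u := by
  unfold clist Lc; split
  · simp
  · exact length_toList y u

lemma clist_cons (y : Perm α) (u : α) : ∃ t, clist y u = u :: t := by
  unfold clist; split
  · exact ⟨[], rfl⟩
  · rename_i hu
    have hsup : u ∈ y.support := mem_support.mpr hu
    have hlen : 0 < (y.toList u).length := length_toList_pos_of_mem_support y u hsup
    obtain ⟨a, t, hat⟩ := List.exists_cons_of_ne_nil (List.ne_nil_of_length_pos hlen)
    refine ⟨t, ?_⟩
    rw [hat]
    suffices h : a = u by rw [h]
    have hg := getElem_toList y u 0 hlen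
    simp only [pow_zero, Equiv.Perm.one_apply, List.get_eq_getElem] at hg
    rw [List.getElem_of_eq hat] at hg
    simpa using hg

lemma mem_clist {y : Perm α} {u v : α} : v ∈ clist y u ↔ y.SameCycle u v := by
  unfold clist; split
  · rename_i hu
    simp only [List.mem_singleton]
    constructor
    · rintro rfl; exact Equiv.Perm.SameCycle.rfl
    · rintro ⟨k, hk⟩
      rw [← hk, zpow_apply_eq_self_of_apply_eq_self hu]
  · rename_i hu
    rw [mem_toList_iff]
    simp [mem_support.mpr hu]

lemma clist_formPerm (y : Perm α) (u : α) : (clist y u).formPerm = y.cycleOf u := by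
  unfold clist; split
  · rename_i hu
    rw [List.formPerm_singleton, eq_comm, cycleOf_eq_one_iff]; exact hu
  · exact formPerm_toList y u

lemma cycleOf_inv_apply_same {y : Perm α} {b u : α} (h : y.SameCycle b u) :
    (y.cycleOf b)⁻¹ u = y⁻¹ u := by
  rw [cycleOf_inv]
  exact Equiv.Perm.SameCycle.cycleOf_apply (sameCycle_inv.mpr h)

lemma cycleOf_inv_apply_not {y : Perm α} {b u : α} (h : ¬ y.SameCycle b u) :
    (y.cycleOf b)⁻¹ u = u := by
  rw [cycleOf_inv]
  exact cycleOf_apply_of_not_sameCycle (fun hh => h (sameCycle_inv.mp hh))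

lemma rest_fix {y : Perm α} {b u : α} (h : y.SameCycle b u) :
    ((y.cycleOf b)⁻¹ * y) u = u := by
  have h2 : y.SameCycle b (y u) := sameCycle_apply_right.mpr h
  rw [Perm.mul_apply, cycleOf_inv_apply_same h2, ← Perm.mul_apply, inv_mul_cancel, Perm.one_apply]

lemma rest_eq {y : Perm α} {b u : α} (h : ¬ y.SameCycle b u) :
    ((y.cycleOf b)⁻¹ * y) u = y u := by
  have h2 : ¬ y.SameCycle b (y u) := fun hh => h (sameCycle_apply_right.mp hh)
  rw [Perm.mul_apply, cycleOf_inv_apply_not h2]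

lemma wsum_formPerm : ∀ {l : List α}, l.Nodup → wsum l.formPerm = wtl l.length
  | [], _ => by simp [wsum, wtl_zero]
  | [x], _ => by simp [wsum, List.formPerm_singleton, wtl_one]
  | a :: b :: t, hl => by
    have h2 : 2 ≤ (a :: b :: t).length := by simp
    have hc := List.isCycle_formPerm hl h2
    have hs : (a :: b :: t).formPerm.support = (a :: b :: t).toFinset :=
      List.support_formPerm_of_nodup _ hl (by
        intro x h
        have := congrArg List.length h
        simp at this)
    have hcard : (a :: b :: t).formPerm.support.card = (a :: b :: t).length := by
      rw [hs, List.toFinset_card_of_nodup hl]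
    rw [wsum, hc.cycleType, hcard]
    simp

lemma wsum_cycleOf (y : Perm α) (b : α) : wsum (y.cycleOf b) = wtl (Lc y b) := by
  rw [← clist_formPerm, ← clist_length]
  exact wsum_formPerm (clist_nodup y b)

end master
section master2
variable {α : Type*} [Fintype α] [DecidableEq α]

lemma merge_lemma {y : Perm α} {b c : α} (hbc : b ≠ c) (hns : ¬ y.SameCycle b c) :
    wsum (swap b c * y) + wtl (Lc y b) + wtl (Lc y c) = wsum y + wtl (Lc y b + Lc y c)
    ∧ Lc (swap b c * y) b = Lc y b + Lc y c := by
  obtain ⟨tb, htb⟩ := clist_cons y b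
  obtain ⟨tc, htc⟩ := clist_cons y c
  have hdisj : ∀ u, u ∈ clist y b → u ∈ clist y c → False := fun u hub huc =>
    hns ((mem_clist.mp hub).trans (mem_clist.mp huc).symm)
  have hnodup : (clist y b ++ clist y c).Nodup :=
    List.Nodup.append (clist_nodup y b) (clist_nodup y c) hdisj
  have hne_b : clist y b ≠ [] := by rw [htb]; simp
  have hne_c : clist y c ≠ [] := by rw [htc]; simp
  have hhead_b : (clist y b).head hne_b = b := by simp [htb]
  have hhead_c : (clist y c).head hne_c = c := by simp [htc]
  set B := y.cycleOf b with hB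
  set C := y.cycleOf c with hC
  set w : Perm α := C⁻¹ * (B⁻¹ * y) with hw
  have hyw : y = B * (C * w) := by rw [hw]; group
  have hw_same_b : ∀ u, y.SameCycle b u → w u = u := by
    intro u hu
    have h1 : (B⁻¹ * y) u = u := rest_fix hu
    have h2 : ¬ y.SameCycle c u := fun hh => hns (hu.trans hh.symm)
    rw [hw, Perm.mul_apply, h1]
    exact cycleOf_inv_apply_not h2
  have hw_same_c : ∀ u, y.SameCycle c u → w u = u := by
    intro u hu
    have hnb : ¬ y.SameCycle b u := fun hh => hns (hh.trans hu.symm)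
    have h1 : (B⁻¹ * y) u = y u := rest_eq hnb
    have h2 : y.SameCycle c (y u) := sameCycle_apply_right.mpr hu
    rw [hw, Perm.mul_apply, h1, cycleOf_inv_apply_same h2, ← Perm.mul_apply, inv_mul_cancel, Perm.one_apply]
  have hw_else : ∀ u, ¬ y.SameCycle b u → ¬ y.SameCycle c u → w u = y u := by
    intro u hub huc
    have h1 : (B⁻¹ * y) u = y u := rest_eq hub
    have h2 : ¬ y.SameCycle c (y u) := fun hh => huc (sameCycle_apply_right.mp hh)
    rw [hw, Perm.mul_apply, h1, cycleOf_inv_apply_not h2]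
  have hDBw : B.Disjoint w := by
    intro u
    by_cases hu : y.SameCycle b u
    · exact Or.inr (hw_same_b u hu)
    · exact Or.inl (cycleOf_apply_of_not_sameCycle hu)
  have hDCw : C.Disjoint w := by
    intro u
    by_cases hu : y.SameCycle c u
    · exact Or.inr (hw_same_c u hu)
    · exact Or.inl (cycleOf_apply_of_not_sameCycle hu)
  have hDBC : B.Disjoint C := by
    intro u
    by_cases hu : y.SameCycle b u
    · exact Or.inr (cycleOf_apply_of_not_sameCycle (fun hh => hns (hu.trans hh.symm)))
    · exact Or.inl (cycleOf_apply_of_not_sameCycle hu)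
  set F := (clist y b ++ clist y c).formPerm with hF
  have hFP : F = swap b c * (B * C) := by
    rw [hF, formPerm_append (clist y b) (clist y c) hnodup hne_b hne_c, hhead_b, hhead_c,
      clist_formPerm, clist_formPerm]
  have hz : swap b c * y = F * w := by
    rw [hFP, hyw]; group
  have hF2 : 2 ≤ (clist y b ++ clist y c).length := by
    rw [List.length_append, htb, htc]; simp only [List.length_cons]; omega
  have hFcyc : F.IsCycle := List.isCycle_formPerm hnodup hF2
  have hFsupport : F.support = (clist y b ++ clist y c).toFinset :=
    List.support_formPerm_of_nodup _ hnodup (by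
      intro x h
      have h1 := congrArg List.length h
      rw [List.length_singleton] at h1
      omega)
  have hDFw : F.Disjoint w := by
    intro u
    by_cases hu : u ∈ clist y b ++ clist y c
    · right
      rcases List.mem_append.mp hu with h | h
      · exact hw_same_b u (mem_clist.mp h)
      · exact hw_same_c u (mem_clist.mp h)
    · exact Or.inl (List.formPerm_apply_of_notMem hu)
  have hwsy : wsum y = wtl (Lc y b) + wtl (Lc y c) + wsum w := by
    conv_lhs => rw [hyw]
    rw [wsum_mul_disjoint (hDBC.mul_right hDBw), wsum_mul_disjoint hDCw,
      hB, hC, wsum_cycleOf, wsum_cycleOf]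
    ring
  have hlen : (clist y b ++ clist y c).length = Lc y b + Lc y c := by
    rw [List.length_append, clist_length, clist_length]
  have hwsz : wsum (swap b c * y) = wtl (Lc y b + Lc y c) + wsum w := by
    rw [hz, wsum_mul_disjoint hDFw, hF, wsum_formPerm hnodup, hlen]
  constructor
  · omega
  · have hb_mem : b ∈ (clist y b ++ clist y c).toFinset := by
      rw [List.mem_toFinset, List.mem_append]
      exact Or.inl (by rw [htb]; simp)
    have hFb : F b ≠ b := mem_support.mp (hFsupport ▸ hb_mem)
    have hwb : w b = b := hw_same_b b Equiv.Perm.SameCycle.rfl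
    have hzb : (swap b c * y) b ≠ b := by
      rw [hz, Perm.mul_apply, hwb]; exact hFb
    have hcyc : (swap b c * y).cycleOf b = F := by
      rw [hz, hDFw.cycleOf_mul_distrib, hFcyc.cycleOf_eq hFb,
        (cycleOf_eq_one_iff w).mpr hwb, mul_one]
    rw [Lc, if_neg hzb, hcyc, hFsupport, List.toFinset_card_of_nodup hnodup, hlen]

lemma split_lemma {y : Perm α} {b c : α} (hbc : b ≠ c) (hs : y.SameCycle b c) :
    wsum (swap b c * y) ≤ wsum y := by
  have hyb : y b ≠ b := by
    intro h
    obtain ⟨k, hk⟩ := hs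
    exact hbc (by rw [← hk, zpow_apply_eq_self_of_apply_eq_self h])
  have hclist : clist y b = y.toList b := by unfold clist; rw [if_neg hyb]
  obtain ⟨t, ht⟩ := clist_cons y b
  rw [hclist] at ht
  have hmem : c ∈ y.toList b := mem_toList_iff.mpr ⟨hs, mem_support.mpr hyb⟩
  have hct : c ∈ t := by
    rw [ht] at hmem
    rcases List.mem_cons.mp hmem with h | h
    · exact absurd h.symm hbc
    · exact h
  obtain ⟨t1, t2, ht12⟩ := List.append_of_mem hct
  have hL : y.toList b = (b :: t1) ++ (c :: t2) := by rw [ht, ht12]; simp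
  have hnodup : ((b :: t1) ++ (c :: t2)).Nodup := hL ▸ nodup_toList y b
  have hBform : y.cycleOf b = ((b :: t1) ++ (c :: t2)).formPerm := by
    rw [← formPerm_toList, hL]
  set w := (y.cycleOf b)⁻¹ * y with hw
  have hyw : y = y.cycleOf b * w := by rw [hw]; group
  have hw_same : ∀ u, y.SameCycle b u → w u = u := fun u hu => rest_fix hu
  have hw_else : ∀ u, ¬ y.SameCycle b u → w u = y u := fun u hu => rest_eq hu
  have hmem_same : ∀ u, u ∈ (b :: t1) ++ (c :: t2) → y.SameCycle b u := by
    intro u hu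
    rw [← hL] at hu
    exact (mem_toList_iff.mp hu).1
  have hsplit : swap b c * ((b :: t1) ++ (c :: t2)).formPerm
      = (b :: t1).formPerm * (c :: t2).formPerm := by
    rw [formPerm_append (b :: t1) (c :: t2) hnodup (by simp) (by simp)]
    simp only [List.head_cons]
    rw [← mul_assoc, swap_mul_self, one_mul]
  have hz : swap b c * y = (b :: t1).formPerm * ((c :: t2).formPerm * w) := by
    conv_lhs => rw [hyw]
    rw [hBform, ← mul_assoc, hsplit, mul_assoc]
  have hD12 : (b :: t1).formPerm.Disjoint (c :: t2).formPerm := by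
    intro u
    by_cases h1 : u ∈ b :: t1
    · refine Or.inr (List.formPerm_apply_of_notMem ?_)
      exact fun h2 => (List.nodup_append'.mp hnodup).2.2 h1 h2
    · exact Or.inl (List.formPerm_apply_of_notMem h1)
  have hD1w : (b :: t1).formPerm.Disjoint w := by
    intro u
    by_cases h1 : u ∈ b :: t1
    · exact Or.inr (hw_same u (hmem_same u (List.mem_append.mpr (Or.inl h1))))
    · exact Or.inl (List.formPerm_apply_of_notMem h1)
  have hD2w : (c :: t2).formPerm.Disjoint w := by
    intro u
    by_cases h1 : u ∈ c :: t2
    · exact Or.inr (hw_same u (hmem_same u (List.mem_append.mpr (Or.inr h1))))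
    · exact Or.inl (List.formPerm_apply_of_notMem h1)
  have hDBw' : (y.cycleOf b).Disjoint w := by
    intro u
    by_cases hu : y.SameCycle b u
    · exact Or.inr (hw_same u hu)
    · exact Or.inl (cycleOf_apply_of_not_sameCycle hu)
  have hwsy : wsum y = wtl ((b :: t1).length + (c :: t2).length) + wsum w := by
    conv_lhs => rw [hyw]
    rw [wsum_mul_disjoint hDBw', hBform, wsum_formPerm hnodup, List.length_append]
  have hwsz : wsum (swap b c * y)
      = wtl (b :: t1).length + (wtl (c :: t2).length + wsum w) := by
    rw [hz, wsum_mul_disjoint (hD12.mul_right hD1w), wsum_mul_disjoint hD2w,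
      wsum_formPerm (List.nodup_append'.mp hnodup).1,
      wsum_formPerm (List.nodup_append'.mp hnodup).2.1]
  have := wtl_add_le (b :: t1).length (c :: t2).length
  omega

end master2
section master3
variable {α : Type*} [Fintype α] [DecidableEq α]

lemma swap_wsum_le {y : Perm α} {b c : α} (hbc : b ≠ c) :
    wsum (swap b c * y) ≤ wsum y + 2 := by
  by_cases hs : y.SameCycle b c
  · have := split_lemma hbc hs; omega
  · obtain ⟨h, _⟩ := merge_lemma hbc hs
    have := wtl_add_le' (Lc y b) (Lc y c)
    omega

lemma swap_wsum_le_of_even {y : Perm α} {b c : α} (hbc : b ≠ c) (he : Even (Lc y c)) :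
    wsum (swap b c * y) ≤ wsum y := by
  by_cases hs : y.SameCycle b c
  · exact split_lemma hbc hs
  · obtain ⟨h, _⟩ := merge_lemma hbc hs
    have := wtl_add_even (Lc y b) (Lc y c) he
    omega

lemma threeCycle_wsum_le {σ y : Perm α} (hσ : σ.IsThreeCycle) :
    wsum (σ * y) ≤ wsum y + 2 := by
  obtain ⟨a, ha⟩ : σ.support.Nonempty := by
    rw [← Finset.card_pos, hσ.card_support]; norm_num
  have hab : a ≠ σ a := Ne.symm (mem_support.mp ha)
  have hbsup : σ a ∈ σ.support := apply_mem_support.mpr ha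
  have hcsup : σ (σ a) ∈ σ.support := apply_mem_support.mpr hbsup
  have hbc : σ a ≠ σ (σ a) := Ne.symm (mem_support.mp hbsup)
  have hσ3 : σ ^ 3 = 1 := by rw [← hσ.orderOf]; exact pow_orderOf_eq_one σ
  have hca : σ (σ (σ a)) = a := by
    have h3 : (σ ^ 3) a = a := by rw [hσ3]; rfl
    simpa [pow_succ, Perm.mul_apply] using h3
  have hac : a ≠ σ (σ a) := by
    intro h
    apply hab
    calc a = σ (σ (σ a)) := hca.symm
      _ = σ a := by rw [← h]
  set b := σ a with hb
  set c := σ b with hc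
  have hsupp : σ.support = {a, b, c} := by
    have hsub : ({a, b, c} : Finset α) ⊆ σ.support := by
      intro x hx
      simp only [Finset.mem_insert, Finset.mem_singleton] at hx
      rcases hx with rfl | rfl | rfl <;> assumption
    have hcard : ({a, b, c} : Finset α).card = 3 := by
      rw [Finset.card_insert_of_notMem (by simp [hab, hac]),
        Finset.card_insert_of_notMem (by simp [hbc])]
      rfl
    exact (Finset.eq_of_subset_of_card_le hsub (by rw [hσ.card_support, hcard])).symm
  have hform : σ = swap a b * swap b c := by
    ext u
    by_cases hu : u ∈ σ.support
    · rw [hsupp] at hu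
      simp only [Finset.mem_insert, Finset.mem_singleton] at hu
      rcases hu with rfl | rfl | rfl
      · rw [Perm.mul_apply, swap_apply_of_ne_of_ne hab hac, swap_apply_left]
      · rw [Perm.mul_apply, swap_apply_left, swap_apply_of_ne_of_ne (Ne.symm hac) (Ne.symm hbc)]
      · rw [Perm.mul_apply, swap_apply_right, swap_apply_right]
        exact hca
    · have h1 : σ u = u := notMem_support.mp hu
      have hua : u ≠ a := by rintro rfl; exact hu (hsupp ▸ by simp)
      have hub : u ≠ b := by rintro rfl; exact hu (hsupp ▸ by simp)
      have huc : u ≠ c := by rintro rfl; exact hu (hsupp ▸ by simp)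
      rw [h1, Perm.mul_apply, swap_apply_of_ne_of_ne hub huc, swap_apply_of_ne_of_ne hua hub]
  rw [hform, mul_assoc]
  set z := swap b c * y with hz
  by_cases hs : y.SameCycle b c
  · have h1 := split_lemma hbc hs
    have h2 := swap_wsum_le (y := z) (b := a) (c := b) hab
    rw [← hz] at h1
    omega
  · obtain ⟨heq, hL⟩ := merge_lemma hbc hs
    rw [← hz] at heq hL
    by_cases hodd : Odd (Lc y b) ∧ Odd (Lc y c)
    · have he : Even (Lc z b) := by rw [hL]; exact hodd.1.add_odd hodd.2
      have h2 : wsum (swap a b * z) ≤ wsum z := swap_wsum_le_of_even hab he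
      have h3 := wtl_add_odd _ _ hodd.1 hodd.2
      omega
    · have hle : wtl (Lc y b + Lc y c) ≤ wtl (Lc y b) + wtl (Lc y c) := by
        rcases Nat.even_or_odd (Lc y c) with hev | hod
        · rw [wtl_add_even _ _ hev]
        · have hev : Even (Lc y b) := by
            rcases Nat.even_or_odd (Lc y b) with h | h
            · exact h
            · exact absurd ⟨h, hod⟩ hodd
          rw [add_comm, wtl_add_even _ _ hev]
          omega
      have h2 := swap_wsum_le (y := z) (b := a) (c := b) hab
      omega

lemma wsum_prod_le {l : List (Perm α)} (h : ∀ t ∈ l, t.IsThreeCycle) :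
    wsum l.prod ≤ 2 * l.length := by
  induction l with
  | nil => simp [wsum_one]
  | cons σ t ih =>
    rw [List.prod_cons]
    have h1 := threeCycle_wsum_le (y := t.prod) (h σ (by simp))
    have h2 := ih (fun x hx => h x (by simp [hx]))
    simp only [List.length_cons]
    omega

end master3
section upper
variable {α : Type*} [Fintype α] [DecidableEq α]

lemma word_odd : ∀ (l : List α), l.Nodup → Odd l.length →
    ∃ w : List (Perm α), (∀ t ∈ w, t.IsThreeCycle) ∧ w.prod = l.formPerm ∧
      2 * w.length + 1 = l.length
  | [], _, h => by simp at h
  | [x], _, _ => ⟨[], by simp, by simp, by simp⟩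
  | [x, y], _, h => by rw [Nat.odd_iff] at h; simp at h
  | a :: b :: c :: t, hl, hlen => by
    have hab : a ≠ b := by rintro rfl; simp [List.nodup_cons] at hl
    have hac : a ≠ c := by rintro rfl; simp [List.nodup_cons] at hl
    have hbc : b ≠ c := by rintro rfl; simp [List.nodup_cons] at hl
    have hl' : (c :: t).Nodup := ((List.nodup_cons.mp (List.nodup_cons.mp hl).2).2)
    have hlen' : Odd (c :: t).length := by
      rw [Nat.odd_iff] at hlen ⊢
      simp only [List.length_cons] at hlen ⊢
      omega
    obtain ⟨w, hw1, hw2, hw3⟩ := word_odd (c :: t) hl' hlen'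
    refine ⟨(swap a b * swap b c) :: w, ?_, ?_, ?_⟩
    · intro s hs
      rcases List.mem_cons.mp hs with rfl | h
      · exact isThreeCycle_swap_swap hab hac hbc
      · exact hw1 _ h
    · rw [List.prod_cons, hw2, List.formPerm_cons_cons, List.formPerm_cons_cons, mul_assoc]
    · simp only [List.length_cons] at hw3 ⊢
      omega

lemma word_swap_even : ∀ (l : List α) (u v : α), l.Nodup → (∀ x ∈ l, x ≠ u) →
    (∀ x ∈ l, x ≠ v) → u ≠ v → Even l.length → l ≠ [] →
    ∃ w : List (Perm α), (∀ t ∈ w, t.IsThreeCycle) ∧ w.prod = swap u v * l.formPerm ∧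
      2 * w.length = l.length + 2
  | [], _, _, _, _, _, _, _, h => absurd rfl h
  | [x], _, _, _, _, _, _, he, _ => by rw [Nat.even_iff] at he; simp at he
  | [p, q], u, v, hl, hu, hv, huv, _, _ => by
    have hpq : p ≠ q := by rintro rfl; simp [List.nodup_cons] at hl
    have hpu : p ≠ u := hu p (by simp)
    have hpv : p ≠ v := hv p (by simp)
    have hqu : q ≠ u := hu q (by simp)
    have hqv : q ≠ v := hv q (by simp)
    refine ⟨[swap u v * swap v p, swap p v * swap p q], ?_, ?_, by simp⟩
    · intro s hs
      rcases List.mem_cons.mp hs with rfl | hs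
      · exact isThreeCycle_swap_swap huv (Ne.symm hpu) (Ne.symm hpv)
      · rcases List.mem_cons.mp hs with rfl | hs
        · exact isThreeCycle_swap_mul_swap_same hpv hpq (Ne.symm hqv)
        · simp at hs
    · have hkey : swap v p * swap p v = 1 := by rw [swap_comm p v, swap_mul_self]
      simp only [List.prod_cons, List.prod_nil, mul_one, List.formPerm_pair]
      calc swap u v * swap v p * (swap p v * swap p q)
          = swap u v * (swap v p * swap p v) * swap p q := by group
        _ = swap u v * swap p q := by rw [hkey, mul_one]
  | p :: q :: r :: t, u, v, hl, hu, hv, huv, he, _ => by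
    have hpq : p ≠ q := by rintro rfl; simp [List.nodup_cons] at hl
    have hpr : p ≠ r := by rintro rfl; simp [List.nodup_cons] at hl
    have hqr : q ≠ r := by rintro rfl; simp [List.nodup_cons] at hl
    have hl' : (r :: t).Nodup := ((List.nodup_cons.mp (List.nodup_cons.mp hl).2).2)
    have he' : Even (r :: t).length := by
      rw [Nat.even_iff] at he ⊢
      simp only [List.length_cons] at he ⊢
      omega
    obtain ⟨w, hw1, hw2, hw3⟩ := word_swap_even (r :: t) u v hl'
      (fun x hx => hu x (by simp [hx])) (fun x hx => hv x (by simp [hx])) huv he' (by simp)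
    have hcomm : Commute (swap u v) (swap p q * swap q r) := by
      apply Equiv.Perm.Disjoint.commute
      intro x
      by_cases hx : x = u ∨ x = v
      · refine Or.inr ?_
        have hxp : x ≠ p := by rcases hx with rfl | rfl
                               · exact fun h => hu p (by simp) h.symm
                               · exact fun h => hv p (by simp) h.symm
        have hxq : x ≠ q := by rcases hx with rfl | rfl
                               · exact fun h => hu q (by simp) h.symm
                               · exact fun h => hv q (by simp) h.symm
        have hxr : x ≠ r := by rcases hx with rfl | rfl
                               · exact fun h => hu r (by simp) h.symm
                               · exact fun h => hv r (by simp) h.symm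
        rw [Perm.mul_apply, swap_apply_of_ne_of_ne hxq hxr, swap_apply_of_ne_of_ne hxp hxq]
      · push_neg at hx
        exact Or.inl (swap_apply_of_ne_of_ne hx.1 hx.2)
    refine ⟨(swap p q * swap q r) :: w, ?_, ?_, ?_⟩
    · intro s hs
      rcases List.mem_cons.mp hs with rfl | h
      · exact isThreeCycle_swap_swap hpq hpr hqr
      · exact hw1 _ h
    · rw [List.prod_cons]
      calc (swap p q * swap q r) * w.prod
          = (swap p q * swap q r) * (swap u v * (r :: t).formPerm) := by rw [hw2]
        _ = swap u v * ((swap p q * swap q r) * (r :: t).formPerm) := by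
            rw [← mul_assoc, ← hcomm.eq, mul_assoc]
        _ = swap u v * (p :: q :: r :: t).formPerm := by
            rw [List.formPerm_cons_cons, List.formPerm_cons_cons, mul_assoc]
    · simp only [List.length_cons] at hw3 ⊢
      omega

lemma word_even_pair : ∀ (l1 l2 : List α), l1.Nodup → l2.Nodup → (∀ x ∈ l1, x ∉ l2) →
    Even l1.length → Even l2.length → l1 ≠ [] → l2 ≠ [] →
    ∃ w : List (Perm α), (∀ t ∈ w, t.IsThreeCycle) ∧ w.prod = l1.formPerm * l2.formPerm ∧
      2 * w.length = l1.length + l2.length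
  | [], _, _, _, _, _, _, h, _ => absurd rfl h
  | [x], _, _, _, _, he, _, _, _ => by rw [Nat.even_iff] at he; simp at he
  | [u, v], l2, hl1, hl2, hdisj, _, he2, _, hne2 => by
    have huv : u ≠ v := by rintro rfl; simp [List.nodup_cons] at hl1
    obtain ⟨w, hw1, hw2, hw3⟩ := word_swap_even l2 u v hl2
      (fun x hx => fun h => hdisj u (by simp) (h ▸ hx))
      (fun x hx => fun h => hdisj v (by simp) (h ▸ hx)) huv he2 hne2
    refine ⟨w, hw1, ?_, ?_⟩
    · rw [hw2, List.formPerm_pair]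
    · simp only [List.length_cons, List.length_nil] at *
      omega
  | a :: b :: c :: t, l2, hl1, hl2, hdisj, he1, he2, _, hne2 => by
    have hab : a ≠ b := by rintro rfl; simp [List.nodup_cons] at hl1
    have hac : a ≠ c := by rintro rfl; simp [List.nodup_cons] at hl1
    have hbc : b ≠ c := by rintro rfl; simp [List.nodup_cons] at hl1
    have hl' : (c :: t).Nodup := ((List.nodup_cons.mp (List.nodup_cons.mp hl1).2).2)
    have he' : Even (c :: t).length := by
      rw [Nat.even_iff] at he1 ⊢
      simp only [List.length_cons] at he1 ⊢
      omega
    obtain ⟨w, hw1, hw2, hw3⟩ := word_even_pair (c :: t) l2 hl' hl2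
      (fun x hx => hdisj x (by simp [List.mem_cons.mp hx])) he' he2 (by simp) hne2
    refine ⟨(swap a b * swap b c) :: w, ?_, ?_, ?_⟩
    · intro s hs
      rcases List.mem_cons.mp hs with rfl | h
      · exact isThreeCycle_swap_swap hab hac hbc
      · exact hw1 _ h
    · rw [List.prod_cons, hw2, List.formPerm_cons_cons, List.formPerm_cons_cons]
      group
    · simp only [List.length_cons] at hw3 ⊢
      omega

lemma formPerm_commute_of_disjoint (l1 l2 : List α) (h : ∀ x ∈ l1, x ∉ l2) :
    Commute l1.formPerm l2.formPerm := by
  apply Equiv.Perm.Disjoint.commute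
  intro u
  by_cases h1 : u ∈ l1
  · exact Or.inr (List.formPerm_apply_of_notMem (h u h1))
  · exact Or.inl (List.formPerm_apply_of_notMem h1)

lemma word_assemble : ∀ (n : ℕ) (ls : List (List α)), ls.length ≤ n →
    (∀ l ∈ ls, l.Nodup) → (∀ l ∈ ls, l ≠ []) →
    List.Pairwise (fun l1 l2 => ∀ x ∈ l1, x ∉ l2) ls →
    Even (ls.countP (fun l => l.length % 2 == 0)) →
    ∃ w : List (Perm α), (∀ t ∈ w, t.IsThreeCycle) ∧
      w.prod = (ls.map List.formPerm).prod ∧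
      2 * w.length = (ls.map (fun l => wtl l.length)).sum := by
  intro n
  induction n with
  | zero =>
    intro ls hn _ _ _ _
    have : ls = [] := List.length_eq_zero_iff.mp (Nat.le_zero.mp hn)
    subst this
    exact ⟨[], by simp, by simp, by simp⟩
  | succ n ih =>
    intro ls hn hnodup hne hp hcount
    rcases ls with _ | ⟨l0, rest⟩
    · exact ⟨[], by simp, by simp, by simp⟩
    have hnrest : rest.length ≤ n := by
      simp only [List.length_cons] at hn; omega
    by_cases hodd : Odd l0.length
    · obtain ⟨w0, hw01, hw02, hw03⟩ := word_odd l0 (hnodup l0 (by simp)) hodd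
      have hcount' : Even (rest.countP (fun l => l.length % 2 == 0)) := by
        rw [List.countP_cons] at hcount
        have hb : (l0.length % 2 == 0) = false := by
          rw [Nat.odd_iff] at hodd
          simp [hodd]
        simpa [hb] using hcount
      obtain ⟨w1, hw11, hw12, hw13⟩ := ih rest hnrest
        (fun l hl => hnodup l (by simp [hl])) (fun l hl => hne l (by simp [hl]))
        (List.pairwise_cons.mp hp).2 hcount'
      refine ⟨w0 ++ w1, ?_, ?_, ?_⟩
      · intro s hs
        rcases List.mem_append.mp hs with h | h
        · exact hw01 _ h
        · exact hw11 _ h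
      · rw [List.prod_append, hw02, hw12, List.map_cons, List.prod_cons]
      · rw [List.length_append, List.map_cons, List.sum_cons, ← hw13, wtl_odd hodd]
        omega
    · have heven : Even l0.length := Nat.not_odd_iff_even.mp hodd
      have hcount0 : (l0.length % 2 == 0) = true := by
        rw [Nat.even_iff] at heven
        simp [heven]
      have hrestodd : ¬ Even (rest.countP (fun l => l.length % 2 == 0)) := by
        rw [List.countP_cons] at hcount
        rw [hcount0, if_pos rfl] at hcount
        rw [Nat.even_iff] at hcount ⊢
        omega
      have hpos : 0 < rest.countP (fun l => l.length % 2 == 0) := by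
        rcases Nat.eq_zero_or_pos (rest.countP (fun l => l.length % 2 == 0)) with h | h
        · exact absurd (by rw [h]; exact Even.zero) hrestodd
        · exact h
      obtain ⟨l1, hl1mem, hl1p⟩ := List.countP_pos_iff.mp hpos
      have hl1even : Even l1.length := by
        rw [Nat.even_iff]
        simpa using hl1p
      obtain ⟨s1, s2, rfl⟩ := List.append_of_mem hl1mem
      set rest' := s1 ++ s2 with hrest'
      have hperm : (s1 ++ l1 :: s2).Perm (l1 :: rest') := List.perm_middle
      have hsub : rest'.Sublist (s1 ++ l1 :: s2) :=
        List.Sublist.append_left (List.sublist_cons_self l1 s2) s1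
      have hdisj01 : ∀ x ∈ l0, x ∉ l1 := (List.pairwise_cons.mp hp).1 l1 hl1mem
      obtain ⟨wp, hwp1, hwp2, hwp3⟩ := word_even_pair l0 l1 (hnodup l0 (by simp))
        (hnodup l1 (by simp [hl1mem])) hdisj01 heven hl1even
        (hne l0 (by simp)) (hne l1 (by simp [hl1mem]))
      have hl1pcnt : (l1.length % 2 == 0) = true := by
        rw [Nat.even_iff] at hl1even; simp [hl1even]
      have hcount'' : Even (rest'.countP (fun l => l.length % 2 == 0)) := by
        have h1 := hperm.countP_eq (fun l => l.length % 2 == 0)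
        rw [List.countP_cons, hl1pcnt, if_pos rfl] at h1
        rw [Nat.even_iff] at hcount ⊢
        rw [List.countP_cons, hcount0, if_pos rfl] at hcount
        omega
      have hlen' : rest'.length ≤ n := by
        have h1 : (s1 ++ l1 :: s2).length = rest'.length + 1 := by
          simp only [hrest', List.length_append, List.length_cons]
          omega
        omega
      obtain ⟨wr, hwr1, hwr2, hwr3⟩ := ih rest' hlen'
        (fun l hl => hnodup l (by simp [hsub.mem hl]))
        (fun l hl => hne l (by simp [hsub.mem hl]))
        (List.Pairwise.sublist hsub (List.pairwise_cons.mp hp).2)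
        hcount''
      have hcommute : List.Pairwise Commute ((s1 ++ l1 :: s2).map List.formPerm) :=
        List.Pairwise.map _ (fun a b hab => formPerm_commute_of_disjoint a b hab)
          (List.pairwise_cons.mp hp).2
      have hprodperm : ((s1 ++ l1 :: s2).map List.formPerm).prod
          = ((l1 :: rest').map List.formPerm).prod :=
        List.Perm.prod_eq' (hperm.map _) hcommute
      refine ⟨wp ++ wr, ?_, ?_, ?_⟩
      · intro s hs
        rcases List.mem_append.mp hs with h | h
        · exact hwp1 _ h
        · exact hwr1 _ h
      · rw [List.prod_append, hwp2, hwr2, List.map_cons, List.prod_cons, hprodperm,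
          List.map_cons, List.prod_cons, ← mul_assoc]
      · have hsumperm : ((s1 ++ l1 :: s2).map fun l => wtl l.length).sum
            = ((l1 :: rest').map fun l => wtl l.length).sum :=
          (hperm.map _).sum_eq
        rw [List.length_append, List.map_cons, List.sum_cons, hsumperm, List.map_cons,
          List.sum_cons]
        rw [wtl_even heven, wtl_even hl1even]
        omega

end upper
section decomp
variable {α : Type*} [Fintype α] [DecidableEq α]

/-- the cycle as a list, for a cycle `g` -/
noncomputable def cyclist (g : Perm α) : List α :=
  if h : g.support.Nonempty then g.toList h.choose else []

lemma cyclist_spec {g : Perm α} (hg : g.IsCycle) :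
    (cyclist g).Nodup ∧ (cyclist g).formPerm = g ∧ (cyclist g).length = g.support.card ∧
      2 ≤ (cyclist g).length := by
  have hne : g.support.Nonempty := by
    rw [← Finset.card_pos]
    have := hg.two_le_card_support
    omega
  have hmoved : g hne.choose ≠ hne.choose := mem_support.mp hne.choose_spec
  rw [cyclist, dif_pos hne]
  refine ⟨nodup_toList _ _, ?_, ?_, ?_⟩
  · rw [formPerm_toList, hg.cycleOf_eq hmoved]
  · rw [length_toList, hg.cycleOf_eq hmoved]
  · rw [length_toList, hg.cycleOf_eq hmoved]
    exact hg.two_le_card_support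

lemma mem_cyclist_support {g : Perm α} {u : α} (h : u ∈ cyclist g) : u ∈ g.support := by
  rw [cyclist] at h
  split at h
  · obtain ⟨hsc, hmem⟩ := mem_toList_iff.mp h
    obtain ⟨k, hk⟩ := hsc
    rw [← hk]
    exact zpow_apply_mem_support.mpr hmem
  · simp at h

lemma countP_parity {β : Type*} (f : β → ℕ) : ∀ (ns : List β),
    (ns.countP (fun n => f n % 2 == 0)) % 2 = ((ns.map f).sum + ns.length) % 2
  | [] => rfl
  | n :: t => by
    rw [List.countP_cons, List.map_cons, List.sum_cons, List.length_cons]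
    have ih := countP_parity f t
    by_cases h : f n % 2 = 0
    · have hb : (f n % 2 == 0) = true := by simp [h]
      rw [hb, if_pos rfl]
      omega
    · have hb : (f n % 2 == 0) = false := by simp [h]
      rw [hb]
      simp only [Bool.false_eq_true, if_false]
      omega

lemma exists_word (x : Perm α) (hsign : Equiv.Perm.sign x = 1) :
    ∃ w : List (Perm α), (∀ t ∈ w, t.IsThreeCycle) ∧ w.prod = x ∧ 2 * w.length = wsum x := by
  set fl := x.cycleFactorsFinset.toList with hfl
  have hflnd : fl.Nodup := Finset.nodup_toList _
  have heq : x.cycleFactorsFinset = fl.toFinset := by rw [hfl, Finset.toList_toFinset]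
  obtain ⟨hcyc, hdisj, hprod⟩ := (cycleFactorsFinset_eq_list_toFinset hflnd).mp heq
  set ls := fl.map cyclist with hls
  have hmapform : ls.map List.formPerm = fl := by
    rw [hls, List.map_map]
    conv_rhs => rw [← List.map_id fl]
    apply List.map_congr_left
    intro g hg
    exact (cyclist_spec (hcyc g hg)).2.1
  have hct : x.cycleType = ↑(ls.map List.length) := by
    rw [cycleType_eq fl hprod hcyc hdisj]
    congr 1
    rw [hls, List.map_map]
    apply List.map_congr_left
    intro g hg
    simp only [Function.comp_apply]
    exact ((cyclist_spec (hcyc g hg)).2.2.1).symm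
  have hparity : Even (x.cycleType.sum + Multiset.card x.cycleType) := by
    rw [sign_of_cycleType] at hsign
    by_contra hodd
    rw [Nat.not_even_iff_odd] at hodd
    rw [hodd.neg_one_pow] at hsign
    exact (by decide : ¬((-1 : ℤˣ) = 1)) hsign
  have hcnt : Even (ls.countP (fun l => l.length % 2 == 0)) := by
    have h2 := countP_parity List.length ls
    have h3 : x.cycleType.sum = (ls.map List.length).sum := by rw [hct]; simp
    have h4 : Multiset.card x.cycleType = ls.length := by rw [hct]; simp
    rw [Nat.even_iff] at hparity ⊢
    rw [h2]
    omega
  obtain ⟨w, hw1, hw2, hw3⟩ := word_assemble ls.length ls le_rfl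
    (by
      intro l hl
      obtain ⟨g, hg, rfl⟩ := List.mem_map.mp hl
      exact (cyclist_spec (hcyc g hg)).1)
    (by
      intro l hl
      obtain ⟨g, hg, rfl⟩ := List.mem_map.mp hl
      have := (cyclist_spec (hcyc g hg)).2.2.2
      intro hnil
      rw [hnil] at this
      simp at this)
    (List.Pairwise.map _ (fun a b (hab : a.Disjoint b) => by
        intro u hua hub
        have h1 := mem_support.mp (mem_cyclist_support hua)
        have h2 := mem_support.mp (mem_cyclist_support hub)
        rcases hab u with h | h
        · exact h1 h
        · exact h2 h) hdisj)
    hcnt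
  refine ⟨w, hw1, ?_, ?_⟩
  · rw [hw2, hmapform, hprod]
  · rw [hw3, wsum, hct]
    simp only [Multiset.map_coe, Multiset.sum_coe, List.map_map]
    rfl

end decomp
lemma multiset_wtl_sum (m : Multiset ℕ) :
    (m.map wtl).sum + (m.filter (fun n => Odd n)).card = m.sum := by
  induction m using Multiset.induction_on with
  | empty => simp
  | cons a s ih =>
    rw [Multiset.map_cons, Multiset.sum_cons, Multiset.filter_cons, Multiset.sum_cons,
      Multiset.card_add]
    by_cases ha : Odd a
    · have h1 : 1 ≤ a := by rw [Nat.odd_iff] at ha; omega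
      rw [wtl_odd ha, if_pos ha]
      simp only [Multiset.card_singleton]
      omega
    · rw [wtl_even (Nat.not_odd_iff_even.mp ha), if_neg ha]
      simp only [Multiset.card_zero]
      omega

theorem stmt0 (N : ℕ) (hN : 3 ≤ N) (x : Perm (Fin N))
    (hx : x ∈ alternatingGroup (Fin N)) :
    lenT (threeCycles N) x = (N - ocyc x) / 2 := by
  have hsign : Equiv.Perm.sign x = 1 := mem_alternatingGroup.mp hx
  obtain ⟨w, hw1, hw2, hw3⟩ := exists_word x hsign
  have hsumle : x.cycleType.sum ≤ N := by
    rw [sum_cycleType]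
    calc x.support.card ≤ Fintype.card (Fin N) := Finset.card_le_univ _
      _ = N := Fintype.card_fin N
  have hws := multiset_wtl_sum x.cycleType
  have hocyc : ocyc x = (x.cycleType.filter (fun n => Odd n)).card + (N - x.cycleType.sum) :=
    rfl
  have hwsum : wsum x = (x.cycleType.map wtl).sum := rfl
  have key : ocyc x + wsum x = N := by omega
  have hmem : w.length ∈ {n | ∃ l : List (Perm (Fin N)),
      (∀ t ∈ l, t ∈ threeCycles N) ∧ l.prod = x ∧ l.length = n} :=
    ⟨w, fun t ht => hw1 t ht, hw2, rfl⟩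
  have hlen_def : lenT (threeCycles N) x = sInf {n | ∃ l : List (Perm (Fin N)),
      (∀ t ∈ l, t ∈ threeCycles N) ∧ l.prod = x ∧ l.length = n} := rfl
  rw [hlen_def]
  apply le_antisymm
  · have h1 := Nat.sInf_le hmem
    omega
  · apply le_csInf ⟨w.length, hmem⟩
    rintro n ⟨l, hl1, hl2, rfl⟩
    have hle := wsum_prod_le (l := l) (fun t ht => hl1 t ht)
    rw [hl2] at hle
    omega
end

section
/- Let x ∈ A_N and let a = (i j k) be a 3-cycle. If i, j, k lie in three pairwise distinct cycles of x of which at least two are odd, then ℓ_3(xa) = ℓ_3(x) + 1. -/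
open Equiv Equiv.Perm

/-- The length of the cycle of `x` containing `t` (fixed points count as cycles of length 1). -/
def cycLen {N : ℕ} (x : Perm (Fin N)) (t : Fin N) : ℕ :=
  if x t = t then 1 else (x.cycleOf t).support.card

variable {N : ℕ}

theorem Equiv.Perm.apply_inv_self {α : Type*} (f : Perm α) (x : α) : f (f⁻¹ x) = x :=
  f.apply_symm_apply x

lemma sameCycle_of_fixed {x : Perm (Fin N)} {u t : Fin N} (h : x u = u) :
    x.SameCycle u t ↔ u = t := by
  constructor
  · rintro ⟨n, hn⟩
    rw [zpow_apply_eq_self_of_apply_eq_self h] at hn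
    exact hn
  · rintro rfl; exact Equiv.Perm.SameCycle.refl _ _

lemma cycLen_fixed {x : Perm (Fin N)} {t : Fin N} (h : x t = t) : cycLen x t = 1 := by
  simp [cycLen, h]

lemma cycLen_congr {x : Perm (Fin N)} {s t : Fin N} (h : x.SameCycle s t) :
    cycLen x s = cycLen x t := by
  by_cases hs : x s = s
  · obtain rfl := (sameCycle_of_fixed hs).mp h; rfl
  · by_cases ht : x t = t
    · obtain rfl := (sameCycle_of_fixed ht).mp h.symm; rfl
    · unfold cycLen; rw [if_neg hs, if_neg ht, h.cycleOf_eq]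

lemma ocyc_one : ocyc (1 : Perm (Fin N)) = N := by
  simp [ocyc, cycleType_one]

lemma ocyc_disjoint {σ τ : Perm (Fin N)} (h : σ.Disjoint τ) :
    ocyc (σ * τ) + N = ocyc σ + ocyc τ := by
  have hsum : σ.cycleType.sum + τ.cycleType.sum ≤ N := by
    rw [sum_cycleType, sum_cycleType]
    have h2 := Finset.card_le_univ (σ.support ∪ τ.support)
    rw [Finset.card_union_of_disjoint h.disjoint_support] at h2
    simpa using h2
  unfold ocyc
  rw [h.cycleType_mul, Multiset.filter_add, Multiset.card_add, Multiset.sum_add]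
  omega

lemma ocyc_isCycle {c : Perm (Fin N)} (h : c.IsCycle) :
    ocyc c = c.support.card % 2 + (N - c.support.card) := by
  unfold ocyc
  rw [h.cycleType]
  simp only [Multiset.coe_singleton, Multiset.sum_singleton]
  by_cases hodd : Odd c.support.card
  · simp [Multiset.filter_singleton, hodd, Nat.odd_iff.mp hodd]
  · simp [Multiset.filter_singleton, hodd, Nat.mod_two_ne_one.mp
      (fun hc => hodd (Nat.odd_iff.mpr hc))]

lemma ocyc_le {x : Perm (Fin N)} : ocyc x ≤ N := by
  have hcard : ∀ s : Multiset ℕ, (∀ n ∈ s, 1 ≤ n) → Multiset.card s ≤ s.sum := by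
    intro s
    induction s using Multiset.induction_on with
    | empty => simp
    | cons a s ih =>
      intro h
      simp only [Multiset.card_cons, Multiset.sum_cons]
      have := h a (Multiset.mem_cons_self a s)
      have := ih (fun n hn => h n (Multiset.mem_cons_of_mem hn))
      omega
  have h1 : Multiset.card (x.cycleType.filter (fun n => Odd n)) ≤ Multiset.card x.cycleType :=
    Multiset.card_le_card (Multiset.filter_le _ _)
  have h2 : Multiset.card x.cycleType ≤ x.cycleType.sum :=
    hcard _ (fun n hn => le_trans (by norm_num) (two_le_of_mem_cycleType hn))
  have h3 : x.cycleType.sum ≤ N := by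
    rw [sum_cycleType]
    have := Finset.card_le_univ x.support
    simpa [Finset.card_univ, Fintype.card_fin] using this
  unfold ocyc
  omega

section lenTlemmas

variable {G : Type*} [Group G] {T : Set G} {x b : G}

lemma lenT_le_of_word {l : List G} (hl : ∀ t ∈ l, t ∈ T) (hp : l.prod = x) :
    lenT T x ≤ l.length :=
  Nat.sInf_le ⟨l, hl, hp, rfl⟩

lemma exists_word_lenT (h : ∃ l : List G, (∀ t ∈ l, t ∈ T) ∧ l.prod = x) :
    ∃ l : List G, (∀ t ∈ l, t ∈ T) ∧ l.prod = x ∧ l.length = lenT T x := by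
  obtain ⟨l, h1, h2⟩ := h
  exact Nat.sInf_mem (⟨l.length, l, h1, h2, rfl⟩ :
    {n | ∃ l : List G, (∀ t ∈ l, t ∈ T) ∧ l.prod = x ∧ l.length = n}.Nonempty)

lemma lenT_one : lenT T (1 : G) = 0 :=
  Nat.sInf_eq_zero.mpr (Or.inl ⟨[], by simp, by simp, rfl⟩)

lemma lenT_mul_le (h : ∃ l : List G, (∀ t ∈ l, t ∈ T) ∧ l.prod = x) (hb : b ∈ T) :
    lenT T (x * b) ≤ lenT T x + 1 := by
  obtain ⟨l, h1, h2, h3⟩ := exists_word_lenT h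
  have := lenT_le_of_word (l := l ++ [b]) (x := x * b)
    (by intro t ht; rcases List.mem_append.mp ht with h | h
        · exact h1 t h
        · simp only [List.mem_singleton] at h; subst h; exact hb)
    (by rw [List.prod_append, List.prod_singleton, h2])
  simpa [h3] using this

end lenTlemmas

lemma exists_word_of_mem_alternating {x : Perm (Fin N)} (hx : x ∈ alternatingGroup (Fin N)) :
    ∃ l : List (Perm (Fin N)), (∀ t ∈ l, t ∈ threeCycles N) ∧ l.prod = x := by
  rw [← closure_three_cycles_eq_alternating] at hx
  induction hx using Subgroup.closure_induction with
  | mem y hy => exact ⟨[y], by simpa [threeCycles] using hy, by simp⟩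
  | one => exact ⟨[], by simp, by simp⟩
  | mul y z _ _ hy hz =>
    obtain ⟨l1, hl1, hp1⟩ := hy
    obtain ⟨l2, hl2, hp2⟩ := hz
    refine ⟨l1 ++ l2, ?_, by rw [List.prod_append, hp1, hp2]⟩
    intro t ht
    rcases List.mem_append.mp ht with h | h
    · exact hl1 t h
    · exact hl2 t h
  | inv y _ hy =>
    obtain ⟨l, hl, hp⟩ := hy
    refine ⟨(l.map fun t => t⁻¹).reverse, ?_, by rw [← List.prod_inv_reverse, hp]⟩
    intro t ht
    rw [List.mem_reverse, List.mem_map] at ht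
    obtain ⟨u, hu, rfl⟩ := ht
    exact (hl u hu).inv

lemma kernel_merge {c d : Perm (Fin N)} {i j : Fin N} (hij : i ≠ j)
    (hcd : c.Disjoint d)
    (hic : c = 1 ∨ (c.IsCycle ∧ i ∈ c.support))
    (hjd : d = 1 ∨ (d.IsCycle ∧ j ∈ d.support))
    (hjc : j ∉ c.support) (hid : i ∉ d.support) :
    (c * d * Equiv.swap i j).IsCycle ∧
      (c * d * Equiv.swap i j).support = c.support ∪ d.support ∪ {i, j} := by
  set e := c * d * Equiv.swap i j with he
  have happ : ∀ t, e t = c (d (Equiv.swap i j t)) := fun t => rfl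
  have hdisj : _root_.Disjoint c.support d.support := hcd.disjoint_support
  have hdc : ∀ t, t ∈ d.support → t ∉ c.support := fun t ht hc =>
    Finset.disjoint_left.mp hdisj hc ht
  have hcd' : ∀ t, t ∈ c.support → t ∉ d.support := fun t ht hd =>
    Finset.disjoint_left.mp hdisj ht hd
  have hdjc : d j ∉ c.support := by
    by_cases hdj : d j = j
    · rwa [hdj]
    · exact hdc _ (apply_mem_support.mpr (mem_support.mpr hdj))
  have h_i : e i = d j := by
    rw [happ, Equiv.swap_apply_left, notMem_support.mp hdjc]
  have h_j : e j = c i := by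
    rw [happ, Equiv.swap_apply_right, notMem_support.mp hid]
  have h_c : ∀ t ∈ c.support, t ≠ i → e t = c t := by
    intro t ht hti
    have htj : t ≠ j := fun h => hjc (h ▸ ht)
    rw [happ, Equiv.swap_apply_of_ne_of_ne hti htj, notMem_support.mp (hcd' t ht)]
  have h_d : ∀ t ∈ d.support, t ≠ j → e t = d t := by
    intro t ht htj
    have hti : t ≠ i := fun h => hid (h ▸ ht)
    rw [happ, Equiv.swap_apply_of_ne_of_ne hti htj,
      notMem_support.mp (hdc _ (apply_mem_support.mpr ht))]
  have h_fix : ∀ t, t ∉ c.support → t ∉ d.support → t ≠ i → t ≠ j → e t = t := by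
    intro t h1 h2 h3 h4
    rw [happ, Equiv.swap_apply_of_ne_of_ne h3 h4, notMem_support.mp h2,
      notMem_support.mp h1]
  have walkA : ∀ m : ℕ, ∀ t, t ∈ d.support → (d ^ m) t = j → e.SameCycle t j := by
    intro m
    induction m with
    | zero => intro t _ h0; rw [pow_zero, Equiv.Perm.one_apply] at h0; subst h0
              exact Equiv.Perm.SameCycle.refl _ _
    | succ m ih =>
      intro t ht hm
      by_cases htj : t = j
      · subst htj; exact Equiv.Perm.SameCycle.refl _ _
      · have het : e t = d t := h_d t ht htj
        have hdt : d t ∈ d.support := apply_mem_support.mpr ht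
        have hm' : (d ^ m) (d t) = j := by
          rw [← Equiv.Perm.mul_apply, ← pow_succ]; exact hm
        have hstep : e.SameCycle t (d t) := ⟨1, by simp [het]⟩
        exact hstep.trans (ih (d t) hdt hm')
  have walkB : ∀ m : ℕ, ∀ t, t ∈ c.support → (c ^ m) t = i → e.SameCycle t i := by
    intro m
    induction m with
    | zero => intro t _ h0; rw [pow_zero, Equiv.Perm.one_apply] at h0; subst h0
              exact Equiv.Perm.SameCycle.refl _ _
    | succ m ih =>
      intro t ht hti
      by_cases h' : t = i
      · subst h'; exact Equiv.Perm.SameCycle.refl _ _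
      · have het : e t = c t := h_c t ht h'
        have hct : c t ∈ c.support := apply_mem_support.mpr ht
        have hm' : (c ^ m) (c t) = i := by
          rw [← Equiv.Perm.mul_apply, ← pow_succ]; exact hti
        have hstep : e.SameCycle t (c t) := ⟨1, by simp [het]⟩
        exact hstep.trans (ih (c t) hct hm')
  have claimA : ∀ t ∈ d.support, e.SameCycle t j := by
    intro t ht
    rcases hjd with h1 | ⟨hcyc, hjm⟩
    · rw [h1] at ht; simp at ht
    · have hsame : d.SameCycle t j := by
        obtain ⟨w, hw, hall⟩ := hcyc
        exact (hall (mem_support.mp ht)).symm.trans (hall (mem_support.mp hjm))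
      obtain ⟨n, _, _, hn⟩ := Equiv.Perm.SameCycle.exists_pow_eq d hsame
      exact walkA n t ht hn
  have claimB : ∀ t ∈ c.support, e.SameCycle t i := by
    intro t ht
    rcases hic with h1 | ⟨hcyc, him⟩
    · rw [h1] at ht; simp at ht
    · have hsame : c.SameCycle t i := by
        obtain ⟨w, hw, hall⟩ := hcyc
        exact (hall (mem_support.mp ht)).symm.trans (hall (mem_support.mp him))
      obtain ⟨n, _, _, hn⟩ := Equiv.Perm.SameCycle.exists_pow_eq c hsame
      exact walkB n t ht hn
  have claimC : e.SameCycle i j := by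
    by_cases hdj : d j = j
    · have h1 : e i = j := by rw [h_i, hdj]
      exact ⟨1, by simp [h1]⟩
    · have h1 : d j ∈ d.support := apply_mem_support.mpr (mem_support.mpr hdj)
      have hstep : e.SameCycle i (d j) := ⟨1, by simp [h_i]⟩
      exact hstep.trans (claimA (d j) h1)
  have hei : e i ≠ i := by
    rw [h_i]
    by_cases hdj : d j = j
    · rw [hdj]; exact fun h => hij h.symm
    · exact fun h => hid (h ▸ apply_mem_support.mpr (mem_support.mpr hdj))
  have hej : e j ≠ j := by
    rw [h_j]
    rcases hic with h1 | ⟨_, him⟩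
    · rw [h1]; simpa using hij
    · exact fun h => hjc (h ▸ apply_mem_support.mpr him)
  constructor
  · refine ⟨i, hei, ?_⟩
    intro y hy
    by_cases h1 : y = i
    · subst h1; exact Equiv.Perm.SameCycle.refl _ _
    by_cases h2 : y = j
    · subst h2; exact claimC
    by_cases h3 : y ∈ c.support
    · exact (claimB y h3).symm
    by_cases h4 : y ∈ d.support
    · exact claimC.trans (claimA y h4).symm
    · exact absurd (h_fix y h3 h4 h1 h2) hy
  · ext t
    simp only [Finset.mem_union, Finset.mem_insert, Finset.mem_singleton, mem_support]
    constructor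
    · intro ht
      by_contra hcon
      push_neg at hcon
      obtain ⟨⟨hc1, hc2⟩, hc3, hc4⟩ := hcon
      exact ht (h_fix t (by simpa [mem_support] using hc1) (by simpa [mem_support] using hc2)
        hc3 hc4)
    · intro ht
      rcases ht with (ht | ht) | ht | ht
      · by_cases h1 : t = i
        · subst h1; exact hei
        · rw [h_c t (mem_support.mpr ht) h1]; exact ht
      · by_cases h1 : t = j
        · subst h1; exact hej
        · rw [h_d t (mem_support.mpr ht) h1]; exact ht
      · subst ht; exact hei
      · subst ht; exact hej

lemma union_pair_aux {β : Type*} [DecidableEq β] (A B : Finset β) (i j : β) :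
    A ∪ B ∪ {i, j} = (A ∪ {i}) ∪ (B ∪ {j}) := by
  ext t
  simp only [Finset.mem_union, Finset.mem_insert, Finset.mem_singleton]
  tauto

set_option maxHeartbeats 1000000 in
lemma merge_main {x : Perm (Fin N)} {i j : Fin N} (hij : ¬x.SameCycle i j) :
    (ocyc (x * Equiv.swap i j) + cycLen x i % 2 + cycLen x j % 2
        = ocyc x + (cycLen x i + cycLen x j) % 2)
    ∧ (x * Equiv.swap i j).SameCycle i j
    ∧ cycLen (x * Equiv.swap i j) j = cycLen x i + cycLen x j
    ∧ ∀ t, ¬x.SameCycle i t → ¬x.SameCycle j t →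
        (¬(x * Equiv.swap i j).SameCycle j t
          ∧ cycLen (x * Equiv.swap i j) t = cycLen x t) := by
  have hij' : i ≠ j := by rintro rfl; exact hij (Equiv.Perm.SameCycle.refl _ _)
  set c := x.cycleOf i with hc
  set d := x.cycleOf j with hd
  have hsuppc : ∀ t, t ∈ c.support → x.SameCycle i t := fun t ht =>
    (mem_support_cycleOf_iff.mp ht).1
  have hsuppd : ∀ t, t ∈ d.support → x.SameCycle j t := fun t ht =>
    (mem_support_cycleOf_iff.mp ht).1
  have hic : c = 1 ∨ (c.IsCycle ∧ i ∈ c.support) := by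
    by_cases h : x i = i
    · exact Or.inl ((cycleOf_eq_one_iff x).mpr h)
    · exact Or.inr ⟨isCycle_cycleOf x h,
        mem_support_cycleOf_iff.mpr ⟨Equiv.Perm.SameCycle.refl _ _, mem_support.mpr h⟩⟩
  have hjd : d = 1 ∨ (d.IsCycle ∧ j ∈ d.support) := by
    by_cases h : x j = j
    · exact Or.inl ((cycleOf_eq_one_iff x).mpr h)
    · exact Or.inr ⟨isCycle_cycleOf x h,
        mem_support_cycleOf_iff.mpr ⟨Equiv.Perm.SameCycle.refl _ _, mem_support.mpr h⟩⟩
  have hjc : j ∉ c.support := fun h => hij (hsuppc j h)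
  have hid : i ∉ d.support := fun h => hij ((hsuppd i h).symm)
  have hcd : c.Disjoint d := by
    rw [disjoint_iff_disjoint_support, Finset.disjoint_left]
    intro t h1 h2
    exact hij ((hsuppc t h1).trans (hsuppd t h2).symm)
  obtain ⟨hecyc, hesupp⟩ := kernel_merge hij' hcd hic hjd hjc hid
  set e := c * d * Equiv.swap i j with he
  set r := x * c⁻¹ * d⁻¹ with hr
  have hcinv : ∀ t, x.SameCycle i t → c⁻¹ t = x⁻¹ t := by
    intro t h
    have h2 : x.SameCycle i (x⁻¹ t) := h.trans ⟨-1, by simp⟩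
    have h3 : c (x⁻¹ t) = t := by
      have := Equiv.Perm.SameCycle.cycleOf_apply h2
      rw [Equiv.Perm.apply_inv_self] at this
      exact this
    calc c⁻¹ t = c⁻¹ (c (x⁻¹ t)) := by rw [h3]
    _ = x⁻¹ t := by simp
  have hdinv : ∀ t, x.SameCycle j t → d⁻¹ t = x⁻¹ t := by
    intro t h
    have h2 : x.SameCycle j (x⁻¹ t) := h.trans ⟨-1, by simp⟩
    have h3 : d (x⁻¹ t) = t := by
      have := Equiv.Perm.SameCycle.cycleOf_apply h2
      rw [Equiv.Perm.apply_inv_self] at this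
      exact this
    calc d⁻¹ t = d⁻¹ (d (x⁻¹ t)) := by rw [h3]
    _ = x⁻¹ t := by simp
  have hnotd : ∀ t, x.SameCycle i t → t ∉ d.support := fun t h hh =>
    hij (h.trans (hsuppd t hh).symm)
  have hnotc : ∀ t, x.SameCycle j t → t ∉ c.support := fun t h hh =>
    hij ((hsuppc t hh).trans h.symm)
  have happr : ∀ t, r t = x (c⁻¹ (d⁻¹ t)) := fun t => rfl
  have hrval1 : ∀ t, x.SameCycle i t → r t = t := by
    intro t h
    have hd1 : d⁻¹ t = t := by
      rw [Equiv.Perm.inv_eq_iff_eq]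
      exact (notMem_support.mp (hnotd t h)).symm
    rw [happr, hd1, hcinv t h, Equiv.Perm.apply_inv_self]
  have hrval2 : ∀ t, x.SameCycle j t → r t = t := by
    intro t h
    have h2 : x.SameCycle j (x⁻¹ t) := h.trans ⟨-1, by simp⟩
    have hc1 : c⁻¹ (x⁻¹ t) = x⁻¹ t := by
      rw [Equiv.Perm.inv_eq_iff_eq]
      exact (notMem_support.mp (hnotc _ h2)).symm
    rw [happr, hdinv t h, hc1, Equiv.Perm.apply_inv_self]
  have hrval3 : ∀ t, ¬x.SameCycle i t → ¬x.SameCycle j t → r t = x t := by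
    intro t h1 h2
    have hd1 : d⁻¹ t = t := by
      rw [Equiv.Perm.inv_eq_iff_eq]
      refine (notMem_support.mp ?_).symm
      exact fun hh => h2 (hsuppd t hh)
    have hc1 : c⁻¹ t = t := by
      rw [Equiv.Perm.inv_eq_iff_eq]
      refine (notMem_support.mp ?_).symm
      exact fun hh => h1 (hsuppc t hh)
    rw [happr, hd1, hc1]
  have hx_dec : x = r * (c * d) := by
    refine Equiv.ext fun t => ?_
    show x t = r (c (d t))
    by_cases h1 : x.SameCycle i t
    · rw [notMem_support.mp (hnotd t h1), Equiv.Perm.SameCycle.cycleOf_apply h1,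
        hrval1 (x t) (h1.trans ⟨1, rfl⟩)]
    · by_cases h2 : x.SameCycle j t
      · rw [Equiv.Perm.SameCycle.cycleOf_apply h2,
          notMem_support.mp (hnotc (x t) (h2.trans ⟨1, rfl⟩)),
          hrval2 (x t) (h2.trans ⟨1, rfl⟩)]
      · have hdt : d t = t := notMem_support.mp (fun hh => h2 (hsuppd t hh))
        have hct : c t = t := notMem_support.mp (fun hh => h1 (hsuppc t hh))
        rw [hdt, hct, hrval3 t h1 h2]
  have hxs_dec : x * Equiv.swap i j = r * e := by
    rw [he, ← mul_assoc]
    rw [← hx_dec]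
  have hre : r.Disjoint e := by
    intro t
    by_cases h1 : x.SameCycle i t
    · exact Or.inl (hrval1 t h1)
    by_cases h2 : x.SameCycle j t
    · exact Or.inl (hrval2 t h2)
    · refine Or.inr (notMem_support.mp ?_)
      rw [hesupp]
      simp only [Finset.mem_union, Finset.mem_insert, Finset.mem_singleton]
      push_neg
      exact ⟨⟨fun hh => h1 (hsuppc t hh), fun hh => h2 (hsuppd t hh)⟩,
        fun hh => h1 (hh ▸ Equiv.Perm.SameCycle.refl _ _),
        fun hh => h2 (hh ▸ Equiv.Perm.SameCycle.refl _ _)⟩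
  have hrcd : r.Disjoint (c * d) := by
    intro t
    by_cases h1 : x.SameCycle i t
    · exact Or.inl (hrval1 t h1)
    by_cases h2 : x.SameCycle j t
    · exact Or.inl (hrval2 t h2)
    · refine Or.inr ?_
      have hdt : d t = t := notMem_support.mp (fun hh => h2 (hsuppd t hh))
      have hct : c t = t := notMem_support.mp (fun hh => h1 (hsuppc t hh))
      show c (d t) = t
      rw [hdt, hct]
  have hcardS : (c.support ∪ {i}).card = cycLen x i := by
    rcases hic with h | ⟨hcyc, him⟩
    · have hfix : x i = i := (cycleOf_eq_one_iff x).mp h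
      rw [cycLen_fixed hfix, h]
      simp
    · have hone : c.support ∪ {i} = c.support := by
        rw [Finset.union_eq_left]
        simpa using him
      have hfix : x i ≠ i := by
        intro hfix
        rw [hc, (cycleOf_eq_one_iff x).mpr hfix] at him
        simp at him
      rw [hone, cycLen, if_neg hfix]
  have hcardT : (d.support ∪ {j}).card = cycLen x j := by
    rcases hjd with h | ⟨hcyc, hjm⟩
    · have hfix : x j = j := (cycleOf_eq_one_iff x).mp h
      rw [cycLen_fixed hfix, h]
      simp
    · have hone : d.support ∪ {j} = d.support := by
        rw [Finset.union_eq_left]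
        simpa using hjm
      have hfix : x j ≠ j := by
        intro hfix
        rw [hd, (cycleOf_eq_one_iff x).mpr hfix] at hjm
        simp at hjm
      rw [hone, cycLen, if_neg hfix]
  have hST : _root_.Disjoint (c.support ∪ {i}) (d.support ∪ {j}) := by
    rw [Finset.disjoint_left]
    intro t h1 h2
    have hti : x.SameCycle i t := by
      rcases Finset.mem_union.mp h1 with h | h
      · exact hsuppc t h
      · rw [Finset.mem_singleton] at h
        exact h ▸ Equiv.Perm.SameCycle.refl _ _
    have htj : x.SameCycle j t := by
      rcases Finset.mem_union.mp h2 with h | h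
      · exact hsuppd t h
      · rw [Finset.mem_singleton] at h
        exact h ▸ Equiv.Perm.SameCycle.refl _ _
    exact hij (hti.trans htj.symm)
  have hesupp' : e.support = (c.support ∪ {i}) ∪ (d.support ∪ {j}) := by
    rw [hesupp, union_pair_aux]
  have hcardE : e.support.card = cycLen x i + cycLen x j := by
    rw [hesupp', Finset.card_union_of_disjoint hST, hcardS, hcardT]
  have hNle : cycLen x i + cycLen x j ≤ N := by
    rw [← hcardE]
    have := Finset.card_le_univ e.support
    simpa using this
  have hNi : cycLen x i ≤ N := le_trans (Nat.le_add_right _ _) hNle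
  have hNj : cycLen x j ≤ N := le_trans (Nat.le_add_left _ _) hNle
  have e1 : ocyc x + N = ocyc r + ocyc (c * d) := by
    conv_lhs => rw [hx_dec]
    exact ocyc_disjoint hrcd
  have e2 : ocyc (c * d) + N = ocyc c + ocyc d := ocyc_disjoint hcd
  have e3 : ocyc c = cycLen x i % 2 + (N - cycLen x i) := by
    rcases hic with h | ⟨hcyc, him⟩
    · have hfix : x i = i := (cycleOf_eq_one_iff x).mp h
      rw [h, ocyc_one, cycLen_fixed hfix]
      have : 0 < N := i.pos
      omega
    · have hfix : x i ≠ i := by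
        intro hfix
        rw [hc, (cycleOf_eq_one_iff x).mpr hfix] at him
        simp at him
      rw [ocyc_isCycle hcyc, cycLen, if_neg hfix]
  have e4 : ocyc d = cycLen x j % 2 + (N - cycLen x j) := by
    rcases hjd with h | ⟨hcyc, hjm⟩
    · have hfix : x j = j := (cycleOf_eq_one_iff x).mp h
      rw [h, ocyc_one, cycLen_fixed hfix]
      have : 0 < N := j.pos
      omega
    · have hfix : x j ≠ j := by
        intro hfix
        rw [hd, (cycleOf_eq_one_iff x).mpr hfix] at hjm
        simp at hjm
      rw [ocyc_isCycle hcyc, cycLen, if_neg hfix]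
  have e5 : ocyc (x * Equiv.swap i j) + N = ocyc r + ocyc e := by
    conv_lhs => rw [hxs_dec]
    exact ocyc_disjoint hre
  have e6 : ocyc e = (cycLen x i + cycLen x j) % 2 + (N - (cycLen x i + cycLen x j)) := by
    rw [ocyc_isCycle hecyc, hcardE]
  refine ⟨by omega, ?_⟩
  have heF : e ∈ (x * Equiv.swap i j).cycleFactorsFinset := by
    rw [mem_cycleFactorsFinset_iff]
    refine ⟨hecyc, ?_⟩
    intro a ha
    rw [hxs_dec]
    show e a = r (e a)
    rcases hre (e a) with h | h
    · exact h.symm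
    · exact absurd (e.injective h) (mem_support.mp ha)
  have hje : j ∈ e.support := by rw [hesupp]; simp
  have hie : i ∈ e.support := by rw [hesupp]; simp
  have hecycOf : e = (x * Equiv.swap i j).cycleOf j := cycle_is_cycleOf hje heF
  have hsuppxs : (x * Equiv.swap i j).support = r.support ∪ e.support := by
    rw [hxs_dec]
    exact hre.support_mul
  have hjxs : j ∈ (x * Equiv.swap i j).support := by
    rw [hsuppxs]
    exact Finset.mem_union_right _ hje
  have hscij : (x * Equiv.swap i j).SameCycle i j := by
    rw [hecycOf] at hie
    exact ((mem_support_cycleOf_iff.mp hie).1).symm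
  refine ⟨hscij, ?_, ?_⟩
  · rw [cycLen, if_neg (mem_support.mp hjxs), ← hecycOf, hcardE]
  · intro t hti htj
    have htnoti : t ≠ i := fun h => hti (h ▸ Equiv.Perm.SameCycle.refl _ _)
    have htnotj : t ≠ j := fun h => htj (h ▸ Equiv.Perm.SameCycle.refl _ _)
    have htnote : t ∉ e.support := by
      rw [hesupp]
      simp only [Finset.mem_union, Finset.mem_insert, Finset.mem_singleton]
      push_neg
      exact ⟨⟨fun hh => hti (hsuppc t hh), fun hh => htj (hsuppd t hh)⟩, htnoti, htnotj⟩
    constructor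
    · intro hcon
      have : t ∈ ((x * Equiv.swap i j).cycleOf j).support :=
        mem_support_cycleOf_iff.mpr ⟨hcon, hjxs⟩
      rw [← hecycOf] at this
      exact htnote this
    · have hxst : (x * Equiv.swap i j) t = x t := by
        show x (Equiv.swap i j t) = x t
        rw [Equiv.swap_apply_of_ne_of_ne htnoti htnotj]
      by_cases hxt : x t = t
      · rw [cycLen_fixed hxt, cycLen_fixed (by rw [hxst]; exact hxt)]
      · have d1 : (x * Equiv.swap i j).cycleOf t = r.cycleOf t * e.cycleOf t := by
          rw [hxs_dec]
          exact hre.cycleOf_mul_distrib t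
        have d2 : x.cycleOf t = r.cycleOf t * (c * d).cycleOf t := by
          conv_lhs => rw [hx_dec]
          exact hrcd.cycleOf_mul_distrib t
        have he1 : e.cycleOf t = 1 :=
          (cycleOf_eq_one_iff e).mpr (notMem_support.mp htnote)
        have hcd1 : (c * d).cycleOf t = 1 := by
          refine (cycleOf_eq_one_iff _).mpr ?_
          have hdt : d t = t := notMem_support.mp (fun hh => htj (hsuppd t hh))
          have hct : c t = t := notMem_support.mp (fun hh => hti (hsuppc t hh))
          show c (d t) = t
          rw [hdt, hct]
        have hcyceq : (x * Equiv.swap i j).cycleOf t = x.cycleOf t := by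
          rw [d1, d2, he1, hcd1]
        rw [cycLen, cycLen, if_neg hxt, if_neg (by rw [hxst]; exact hxt), hcyceq]

lemma split_lemma_s4 {x : Perm (Fin N)} {i j : Fin N} (hij : i ≠ j) (h : x.SameCycle i j) :
    ¬(x * Equiv.swap i j).SameCycle i j := by
  set y := x * Equiv.swap i j with hy
  have happ : ∀ t, y t = x (Equiv.swap i j t) := fun t => rfl
  have hex : ∃ m : ℕ, 0 < m ∧ (x ^ m) i = j := by
    obtain ⟨n, hn0, _, hn⟩ := Equiv.Perm.SameCycle.exists_pow_eq x h
    exact ⟨n, hn0, hn⟩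
  classical
  set m := Nat.find hex with hm
  obtain ⟨hm0, hmj⟩ := Nat.find_spec hex
  have hmin : ∀ s, 0 < s → s < m → (x ^ s) i ≠ j := by
    intro s hs0 hsm hcon
    exact Nat.find_min hex hsm ⟨hs0, hcon⟩
  have hnoti : ∀ s, 0 < s → s < m → (x ^ s) i ≠ i := by
    intro s hs0 hsm hcon
    have h2 : (x ^ (m - s)) i = j := by
      have h3 : (x ^ (m - s)) ((x ^ s) i) = (x ^ m) i := by
        rw [← Equiv.Perm.mul_apply, ← pow_add]
        congr 2
        omega
      rw [hcon] at h3
      exact h3.trans hmj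
    exact hmin (m - s) (by omega) (by omega) h2
  have W : ∀ s, 0 < s → s ≤ m → (y ^ s) j = (x ^ s) i := by
    intro s
    induction s with
    | zero => intro h0; omega
    | succ s ih =>
      intro _ hsm
      by_cases hs0 : s = 0
      · subst hs0
        rw [pow_one, pow_one, happ, Equiv.swap_apply_right]
      · have hs0' : 0 < s := Nat.pos_of_ne_zero hs0
        have ihs := ih hs0' (by omega)
        have hxsi : (x ^ s) i ≠ i := hnoti s hs0' (by omega)
        have hxsj : (x ^ s) i ≠ j := hmin s hs0' (by omega)
        calc (y ^ (s + 1)) j = y ((y ^ s) j) := by rw [← Equiv.Perm.mul_apply, ← pow_succ']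
        _ = y ((x ^ s) i) := by rw [ihs]
        _ = x ((x ^ s) i) := by rw [happ, Equiv.swap_apply_of_ne_of_ne hxsi hxsj]
        _ = (x ^ (s + 1)) i := by rw [← Equiv.Perm.mul_apply, ← pow_succ']
  have hper : (y ^ m) j = j := by rw [W m hm0 le_rfl, hmj]
  have hall : ∀ n : ℕ, ∃ s, 0 < s ∧ s ≤ m ∧ (y ^ n) j = (x ^ s) i := by
    intro n
    induction n using Nat.strong_induction_on with
    | _ n ih =>
      by_cases hn0 : n = 0
      · exact ⟨m, hm0, le_rfl, by subst hn0; simpa using hmj.symm⟩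
      · by_cases hnm : n ≤ m
        · exact ⟨n, Nat.pos_of_ne_zero hn0, hnm, W n (Nat.pos_of_ne_zero hn0) hnm⟩
        · have h1 : (y ^ n) j = (y ^ (n - m)) j := by
            have h2 : y ^ n = y ^ (n - m) * y ^ m := by
              rw [← pow_add]
              congr 1
              omega
            rw [h2, Equiv.Perm.mul_apply, hper]
          obtain ⟨s, ha, hb, hceq⟩ := ih (n - m) (by omega)
          exact ⟨s, ha, hb, h1.trans hceq⟩
  intro hcon
  obtain ⟨n, hn0, _, hn⟩ := Equiv.Perm.SameCycle.exists_pow_eq y hcon.symm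
  obtain ⟨s, hs0, hsm, hseq⟩ := hall n
  rw [hn] at hseq
  by_cases hcase : s < m
  · exact hnoti s hs0 hcase hseq.symm
  · have hsm' : s = m := by omega
    subst hsm'
    exact hij (hseq.trans hmj)

lemma split_le {z : Perm (Fin N)} {u v : Fin N} (huv : u ≠ v) (h : z.SameCycle u v) :
    ocyc z ≤ ocyc (z * Equiv.swap u v) := by
  have h2 := split_lemma_s4 huv h
  have h3 : z * Equiv.swap u v * Equiv.swap u v = z := by
    rw [mul_assoc, Equiv.swap_mul_self, mul_one]
  have E := (merge_main h2).1
  rw [h3] at E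
  omega

lemma swap_bound {z : Perm (Fin N)} {u v : Fin N} (huv : u ≠ v) :
    ocyc z ≤ ocyc (z * Equiv.swap u v) + 2 := by
  by_cases h : z.SameCycle u v
  · have := split_le huv h
    omega
  · have := (merge_main h).1
    omega

lemma threeCycle_decomp {b : Perm (Fin N)} (hb : b.IsThreeCycle) :
    ∃ i j k : Fin N, i ≠ j ∧ j ≠ k ∧ i ≠ k ∧ b = Equiv.swap i j * Equiv.swap j k := by
  obtain ⟨i, hi, -⟩ := hb.isCycle
  have hij : i ≠ b i := Ne.symm hi
  have hjsupp : b (b i) ≠ b i := fun h => hi (b.injective h)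
  have hjk : b i ≠ b (b i) := Ne.symm hjsupp
  have hik : i ≠ b (b i) := by
    intro h
    have h3 := hb.isCycle.eq_swap_of_apply_apply_eq_self hi h.symm
    have h4 := hb.card_support
    rw [h3, card_support_swap hij] at h4
    omega
  have hksupp : b (b (b i)) ≠ b (b i) := fun h => hjsupp (b.injective h)
  have hcard3 : ({i, b i, b (b i)} : Finset (Fin N)).card = 3 := by
    rw [Finset.card_insert_of_notMem (by simp [hij, hik]),
      Finset.card_insert_of_notMem (by simp [hjk]), Finset.card_singleton]
  have hsupp : ({i, b i, b (b i)} : Finset (Fin N)) = b.support := by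
    apply Finset.eq_of_subset_of_card_le
    · intro t ht
      simp only [Finset.mem_insert, Finset.mem_singleton] at ht
      rcases ht with rfl | rfl | rfl
      · exact mem_support.mpr hi
      · exact mem_support.mpr hjsupp
      · exact mem_support.mpr hksupp
    · rw [hb.card_support, hcard3]
  have hbk : b (b (b i)) = i := by
    have h1 : b (b (b i)) ∈ b.support := by
      simp only [apply_mem_support]
      exact mem_support.mpr hi
    rw [← hsupp] at h1
    simp only [Finset.mem_insert, Finset.mem_singleton] at h1
    rcases h1 with h1 | h1 | h1
    · exact h1
    · exact absurd (b.injective h1).symm hik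
    · exact absurd h1 hksupp
  refine ⟨i, b i, b (b i), hij, hjk, hik, Equiv.ext fun t => ?_⟩
  show b t = Equiv.swap i (b i) (Equiv.swap (b i) (b (b i)) t)
  by_cases h1 : t = i
  · subst h1
    rw [Equiv.swap_apply_of_ne_of_ne hij hik, Equiv.swap_apply_left]
  by_cases h2 : t = b i
  · subst h2
    rw [Equiv.swap_apply_left, Equiv.swap_apply_of_ne_of_ne (Ne.symm hik) (Ne.symm hjk)]
  by_cases h3 : t = b (b i)
  · subst h3
    rw [Equiv.swap_apply_right, Equiv.swap_apply_right, hbk]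
  · have ht : t ∉ b.support := by
      rw [← hsupp]
      simp [h1, h2, h3]
    rw [notMem_support.mp ht, Equiv.swap_apply_of_ne_of_ne h2 h3,
      Equiv.swap_apply_of_ne_of_ne h1 h2]

lemma threecycle_step {z b : Perm (Fin N)} (hb : b.IsThreeCycle) :
    ocyc z ≤ ocyc (z * b) + 2 := by
  obtain ⟨i, j, k, hij, hjk, hik, rfl⟩ := threeCycle_decomp hb
  rw [← mul_assoc]
  set z1 := z * Equiv.swap i j with hz1
  by_cases hodd : cycLen z1 j % 2 = 1
  · have hA : ocyc z ≤ ocyc z1 := by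
      by_cases h : z.SameCycle i j
      · exact split_le hij h
      · have E := (merge_main h).1
        have B := (merge_main h).2.2.1
        rw [← hz1] at E B
        omega
    have hB : ocyc z1 ≤ ocyc (z1 * Equiv.swap j k) + 2 := swap_bound hjk
    omega
  · have hA : ocyc z ≤ ocyc z1 + 2 := swap_bound hij
    have hB : ocyc z1 ≤ ocyc (z1 * Equiv.swap j k) := by
      by_cases h : z1.SameCycle j k
      · exact split_le hjk h
      · have E := (merge_main h).1
        omega
    omega

lemma lower_bound : ∀ l : List (Perm (Fin N)), (∀ t ∈ l, t.IsThreeCycle) →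
    N ≤ ocyc l.prod + 2 * l.length := by
  intro l
  induction l using List.reverseRecOn with
  | nil => intro _; simp [ocyc_one]
  | append_singleton l a ih =>
    intro hmem
    have h1 := ih (fun t ht => hmem t (List.mem_append_left _ ht))
    have h3 : ocyc l.prod ≤ ocyc (l.prod * a) + 2 :=
      threecycle_step (hmem a (by simp))
    rw [List.prod_append, List.prod_singleton, List.length_append,
      List.length_singleton]
    omega

lemma lenT_lower {x : Perm (Fin N)} (hx : x ∈ alternatingGroup (Fin N)) :
    N ≤ ocyc x + 2 * lenT (threeCycles N) x := by
  obtain ⟨l, hl, hp, hlen⟩ := exists_word_lenT (exists_word_of_mem_alternating hx)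
  rw [← hlen, ← hp]
  exact lower_bound l (fun t ht => hl t ht)

lemma cycLen_two {x : Perm (Fin N)} {k : Fin N} (h1 : x k ≠ k) (h2 : x (x k) = k) :
    cycLen x k = 2 := by
  have hcyc := isCycle_cycleOf x h1
  have hck : x.cycleOf k k = x k := cycleOf_apply_self x k
  have hcck : x.cycleOf k (x.cycleOf k k) = k := by
    rw [hck, Equiv.Perm.SameCycle.cycleOf_apply ⟨1, by simp⟩, h2]
  have heq := hcyc.eq_swap_of_apply_apply_eq_self (by rw [hck]; exact h1) hcck
  rw [hck] at heq
  rw [cycLen, if_neg h1, heq, card_support_swap (Ne.symm h1)]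

lemma ocyc_lt_of_ne_one {x : Perm (Fin N)} (h : x ≠ 1) : ocyc x < N := by
  have hsum : ∀ s : Multiset ℕ, (∀ n ∈ s, 2 ≤ n) → 2 * Multiset.card s ≤ s.sum := by
    intro s
    induction s using Multiset.induction_on with
    | empty => simp
    | cons a s ih =>
      intro hmem
      simp only [Multiset.card_cons, Multiset.sum_cons]
      have := hmem a (Multiset.mem_cons_self a s)
      have := ih (fun n hn => hmem n (Multiset.mem_cons_of_mem hn))
      omega
  have h2 : 2 * Multiset.card x.cycleType ≤ x.cycleType.sum :=
    hsum _ (fun n hn => two_le_of_mem_cycleType hn)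
  have h1 : Multiset.card (x.cycleType.filter (fun n => Odd n)) ≤ Multiset.card x.cycleType :=
    Multiset.card_le_card (Multiset.filter_le _ _)
  have h3 : x.cycleType.sum ≤ N := by
    rw [sum_cycleType]
    have := Finset.card_le_univ x.support
    simpa using this
  have h4 : 0 < x.cycleType.sum := by
    rw [sum_cycleType, Finset.card_pos]
    rcases Finset.eq_empty_or_nonempty x.support with he | hne
    · exact absurd (support_eq_empty_iff.mp he) h
    · exact hne
  unfold ocyc
  omega

lemma key_construct {x : Perm (Fin N)} (hx : x ∈ alternatingGroup (Fin N)) (hne : x ≠ 1) :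
    ∃ b : Perm (Fin N), b.IsThreeCycle ∧ ocyc (x * b) = ocyc x + 2 := by
  by_cases hcase : ∃ t, x t ≠ t ∧ x (x t) ≠ t
  · -- some cycle of length ≥ 3
    obtain ⟨i, hi, hii⟩ := hcase
    obtain ⟨j, hj⟩ : ∃ j, x i = j := ⟨_, rfl⟩
    obtain ⟨k, hk⟩ : ∃ k, x j = k := ⟨_, rfl⟩
    have hij : i ≠ j := by intro h; rw [← h] at hj; exact hi hj
    have hjsupp : x j ≠ j := by
      intro h
      exact hij (x.injective (h.trans hj.symm)).symm
    have hjk : j ≠ k := by intro h; exact hjsupp (hk.trans h.symm)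
    have hxxi : x (x i) = k := by rw [hj, hk]
    have hik : i ≠ k := fun h => hii (hxxi.trans h.symm)
    refine ⟨Equiv.swap k j * Equiv.swap j i, ?_, ?_⟩
    · rw [Equiv.swap_comm k j]
      exact isThreeCycle_swap_mul_swap_same hjk (Ne.symm hij) (Ne.symm hik)
    set y := x * (Equiv.swap k j * Equiv.swap j i) with hy
    have happy : ∀ t, y t = x (Equiv.swap k j (Equiv.swap j i t)) := fun t => rfl
    have hyj : y j = j := by
      rw [happy, Equiv.swap_apply_left j i, Equiv.swap_apply_of_ne_of_ne hik hij]
      exact hj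
    have hyk : y k = k := by
      rw [happy, Equiv.swap_apply_of_ne_of_ne (Ne.symm hjk) (Ne.symm hik),
        Equiv.swap_apply_left k j]
      exact hk
    have hid1 : Equiv.swap k j * Equiv.swap j i * Equiv.swap k i * Equiv.swap i j = 1 := by
      refine Equiv.ext fun t => ?_
      simp only [Equiv.Perm.mul_apply, Equiv.Perm.one_apply]
      by_cases h1 : t = i
      · rw [h1, Equiv.swap_apply_left i j, Equiv.swap_apply_of_ne_of_ne hjk (Ne.symm hij),
          Equiv.swap_apply_left j i, Equiv.swap_apply_of_ne_of_ne hik hij]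
      by_cases h2 : t = j
      · rw [h2, Equiv.swap_apply_right i j, Equiv.swap_apply_right k i,
          Equiv.swap_apply_of_ne_of_ne (Ne.symm hjk) (Ne.symm hik),
          Equiv.swap_apply_left k j]
      by_cases h3 : t = k
      · rw [h3, Equiv.swap_apply_of_ne_of_ne (Ne.symm hik) (Ne.symm hjk),
          Equiv.swap_apply_left k i, Equiv.swap_apply_right j i,
          Equiv.swap_apply_right k j]
      · rw [Equiv.swap_apply_of_ne_of_ne h1 h2, Equiv.swap_apply_of_ne_of_ne h3 h1,
          Equiv.swap_apply_of_ne_of_ne h2 h1, Equiv.swap_apply_of_ne_of_ne h3 h2]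
    have hxdec : y * Equiv.swap k i * Equiv.swap i j = x := by
      rw [hy, mul_assoc x _ (Equiv.swap k i), mul_assoc x _ (Equiv.swap i j), hid1, mul_one]
    have hnot1 : ¬ y.SameCycle k i := fun hcon =>
      (Ne.symm hik) ((sameCycle_of_fixed hyk).mp hcon)
    obtain ⟨E1, C1, B1, -⟩ := merge_main hnot1
    have hy1j : (y * Equiv.swap k i) j = j := by
      show y (Equiv.swap k i j) = j
      rw [Equiv.swap_apply_of_ne_of_ne hjk (Ne.symm hij), hyj]
    have hnot2 : ¬ (y * Equiv.swap k i).SameCycle i j := fun hcon =>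
      (Ne.symm hij) ((sameCycle_of_fixed hy1j).mp hcon.symm)
    obtain ⟨E2, -, -, -⟩ := merge_main hnot2
    rw [hxdec] at E2
    rw [cycLen_fixed hyk] at E1
    rw [cycLen_fixed hy1j] at E2
    rw [cycLen_fixed hyk] at B1
    omega
  · -- all cycles have length ≤ 2
    push_neg at hcase
    have hex : ∃ i, x i ≠ i := by
      by_contra hcon
      push_neg at hcon
      exact hne (Equiv.ext hcon)
    obtain ⟨i, hi⟩ := hex
    obtain ⟨j, hj⟩ : ∃ j, x i = j := ⟨_, rfl⟩
    have hij : i ≠ j := by intro h; rw [← h] at hj; exact hi hj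
    have hxj : x j = i := by
      have := hcase i hi
      rwa [hj] at this
    have hscij : x.SameCycle i j := ⟨1, by simp [hj]⟩
    have hexk : ∃ k, x k ≠ k ∧ ¬ x.SameCycle i k := by
      by_contra hcon
      push_neg at hcon
      have hclaim : x = Equiv.swap i j := by
        refine Equiv.ext fun t => ?_
        by_cases hxt : x t = t
        · have ht1 : t ≠ i := fun h => hi (h ▸ hxt)
          have ht2 : t ≠ j := by
            intro h
            subst h
            exact hij (hxj.symm.trans hxt)
          rw [hxt, Equiv.swap_apply_of_ne_of_ne ht1 ht2]
        · have hsc := hcon t hxt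
          obtain ⟨n, hn0, -, hn⟩ := Equiv.Perm.SameCycle.exists_pow_eq x hsc
          have horb : ∀ m : ℕ, (x ^ m) i = i ∨ (x ^ m) i = j := by
            intro m
            induction m with
            | zero => left; simp
            | succ m ih =>
              rw [pow_succ', Equiv.Perm.mul_apply]
              rcases ih with h | h
              · rw [h]; right; exact hj
              · rw [h, hxj]; left; rfl
          rcases horb n with h | h <;> rw [hn] at h <;> subst h
          · rw [Equiv.swap_apply_left]; exact hj
          · rw [Equiv.swap_apply_right]; exact hxj
      have hsign := mem_alternatingGroup.mp hx
      rw [hclaim, sign_swap hij] at hsign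
      exact absurd hsign (by decide)
    obtain ⟨k, hk1, hk2⟩ := hexk
    have hik : i ≠ k := fun h => hk2 (h ▸ Equiv.Perm.SameCycle.refl x i)
    have hnotkj : ¬ x.SameCycle k j := fun h => hk2 (hscij.trans h.symm)
    have hjk : j ≠ k := by
      intro h
      exact hnotkj (by rw [← h])
    refine ⟨Equiv.swap i j * Equiv.swap j k, ?_, ?_⟩
    · rw [Equiv.swap_comm i j]
      exact isThreeCycle_swap_mul_swap_same (Ne.symm hij) hjk hik
    set y := x * (Equiv.swap i j * Equiv.swap j k) with hy
    have happy : ∀ t, y t = x (Equiv.swap i j (Equiv.swap j k t)) := fun t => rfl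
    have hyi : y i = i := by
      rw [happy, Equiv.swap_apply_of_ne_of_ne hij hik, Equiv.swap_apply_left i j, hxj]
    have hid2 : Equiv.swap i j * Equiv.swap j k * Equiv.swap i k = Equiv.swap k j := by
      refine Equiv.ext fun t => ?_
      simp only [Equiv.Perm.mul_apply]
      by_cases h1 : t = i
      · rw [h1, Equiv.swap_apply_left i k, Equiv.swap_apply_right j k,
          Equiv.swap_apply_right i j, Equiv.swap_apply_of_ne_of_ne hik hij]
      by_cases h2 : t = j
      · rw [h2, Equiv.swap_apply_of_ne_of_ne (Ne.symm hij) hjk, Equiv.swap_apply_left j k,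
          Equiv.swap_apply_of_ne_of_ne (Ne.symm hik) (Ne.symm hjk),
          Equiv.swap_apply_right k j]
      by_cases h3 : t = k
      · rw [h3, Equiv.swap_apply_right i k, Equiv.swap_apply_of_ne_of_ne hij hik,
          Equiv.swap_apply_left i j, Equiv.swap_apply_left k j]
      · rw [Equiv.swap_apply_of_ne_of_ne h1 h3, Equiv.swap_apply_of_ne_of_ne h2 h3,
          Equiv.swap_apply_of_ne_of_ne h1 h2, Equiv.swap_apply_of_ne_of_ne h3 h2]
    have hy1eq : y * Equiv.swap i k = x * Equiv.swap k j := by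
      rw [hy, mul_assoc x _ (Equiv.swap i k), hid2]
    obtain ⟨E1, C1, B1, -⟩ := merge_main hnotkj
    have hnot2 : ¬ y.SameCycle i k := fun hcon =>
      hik ((sameCycle_of_fixed hyi).mp hcon)
    obtain ⟨E2, -, B2, -⟩ := merge_main hnot2
    rw [hy1eq] at E2 B2
    have hxjne : x j ≠ j := by rw [hxj]; exact hij
    have hclj : cycLen x j = 2 := by
      refine cycLen_two hxjne ?_
      rw [hxj]; exact hj
    have hclk : cycLen x k = 2 := cycLen_two hk1 (hcase k hk1)
    have hcc : cycLen (x * Equiv.swap k j) k = cycLen (x * Equiv.swap k j) j :=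
      cycLen_congr C1
    rw [cycLen_fixed hyi] at E2 B2
    rw [hclj, hclk] at E1 B1
    omega
lemma upper_bound : ∀ n : ℕ, ∀ x : Perm (Fin N), x ∈ alternatingGroup (Fin N) →
    N - ocyc x ≤ n → 2 * lenT (threeCycles N) x + ocyc x ≤ N := by
  intro n
  induction n with
  | zero =>
    intro x hx h0
    by_cases h1 : x = 1
    · subst h1; rw [lenT_one, ocyc_one]; omega
    · have := ocyc_lt_of_ne_one h1
      omega
  | succ n ih =>
    intro x hx hle
    by_cases h1 : x = 1
    · subst h1; rw [lenT_one, ocyc_one]; omega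
    · obtain ⟨b, hb3, hocyc⟩ := key_construct hx h1
      have hmem : x * b ∈ alternatingGroup (Fin N) :=
        Subgroup.mul_mem _ hx hb3.mem_alternatingGroup
      have hocN : ocyc (x * b) ≤ N := ocyc_le
      have ihy := ih (x * b) hmem (by omega)
      have hword : lenT (threeCycles N) x ≤ lenT (threeCycles N) (x * b) + 1 := by
        have hxb : (x * b) * b⁻¹ = x := by group
        have h2 := lenT_mul_le (exists_word_of_mem_alternating hmem)
          (show b⁻¹ ∈ threeCycles N from hb3.inv)
        rwa [hxb] at h2
      omega

theorem stmt4 (N : ℕ) (x : Perm (Fin N)) (hx : x ∈ alternatingGroup (Fin N))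
    (i j k : Fin N)
    (hij : ¬ x.SameCycle i j) (hjk : ¬ x.SameCycle j k) (hik : ¬ x.SameCycle i k)
    (hodd : (Odd (cycLen x i) ∧ Odd (cycLen x j))
          ∨ (Odd (cycLen x i) ∧ Odd (cycLen x k))
          ∨ (Odd (cycLen x j) ∧ Odd (cycLen x k))) :
    lenT (threeCycles N) (x * (Equiv.swap i j * Equiv.swap j k))
      = lenT (threeCycles N) x + 1 := by 
  have hij' : i ≠ j := by intro h; rw [h] at hij; exact hij (Equiv.Perm.SameCycle.refl x j)
  have hjk' : j ≠ k := by intro h; rw [h] at hjk; exact hjk (Equiv.Perm.SameCycle.refl x k)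
  have hik' : i ≠ k := by intro h; rw [h] at hik; exact hik (Equiv.Perm.SameCycle.refl x k)
  have hb3 : (Equiv.swap i j * Equiv.swap j k).IsThreeCycle := by
    rw [Equiv.swap_comm i j]
    exact isThreeCycle_swap_mul_swap_same (Ne.symm hij') hjk' hik'
  obtain ⟨E1, C1, B1, D1⟩ := merge_main hij
  obtain ⟨hD1, hD2⟩ := D1 k hik hjk
  obtain ⟨E2, -, -, -⟩ := merge_main hD1
  have hassoc : x * (Equiv.swap i j * Equiv.swap j k)
      = x * Equiv.swap i j * Equiv.swap j k := (mul_assoc _ _ _).symm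
  have hocyc : ocyc (x * (Equiv.swap i j * Equiv.swap j k)) + 2 = ocyc x := by
    rw [hassoc]
    rw [B1, hD2] at E2
    rcases hodd with ⟨h1, h2⟩ | ⟨h1, h2⟩ | ⟨h1, h2⟩ <;>
      rw [Nat.odd_iff] at h1 h2 <;> omega
  have hmem : x * (Equiv.swap i j * Equiv.swap j k) ∈ alternatingGroup (Fin N) :=
    Subgroup.mul_mem _ hx hb3.mem_alternatingGroup
  have h_up : 2 * lenT (threeCycles N) x + ocyc x ≤ N :=
    upper_bound (N - ocyc x) x hx le_rfl
  have h_low : N ≤ ocyc (x * (Equiv.swap i j * Equiv.swap j k))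
      + 2 * lenT (threeCycles N) (x * (Equiv.swap i j * Equiv.swap j k)) :=
    lenT_lower hmem
  have h_le : lenT (threeCycles N) (x * (Equiv.swap i j * Equiv.swap j k))
      ≤ lenT (threeCycles N) x + 1 :=
    lenT_mul_le (exists_word_of_mem_alternating hx)
      (show (Equiv.swap i j * Equiv.swap j k) ∈ threeCycles N from hb3)
  omega
end

section
/- For x, y ∈ A_N^o, if x ≤_3 y then x ≤_2 y, where ≤_2 is the absolute (prefix) order on S_N with respect to transpositions. That is, (A_N^o, ≤_3) is a subposet of (S_N, ≤_2). -/
open Equiv Equiv.Perm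

/-! ### Generic word-length lemmas -/

section WordLength

variable {G : Type*} [Group G] {T : Set G}

lemma lenT_le {x : G} {l : List G} (hl : ∀ t ∈ l, t ∈ T) (hp : l.prod = x) :
    lenT T x ≤ l.length :=
  Nat.sInf_le ⟨l, hl, hp, rfl⟩

lemma exists_min_word {x : G} {l0 : List G} (hl0 : ∀ t ∈ l0, t ∈ T) (hp0 : l0.prod = x) :
    ∃ l : List G, (∀ t ∈ l, t ∈ T) ∧ l.prod = x ∧ l.length = lenT T x := by
  have hne : {n | ∃ l : List G, (∀ t ∈ l, t ∈ T) ∧ l.prod = x ∧ l.length = n}.Nonempty :=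
    ⟨l0.length, l0, hl0, hp0, rfl⟩
  exact Nat.sInf_mem hne

end WordLength

/-! ### Combinatorial lemmas on permutations -/

section Perms

variable {α : Type*} [DecidableEq α] [Fintype α]

lemma card_support_eq_two_of {f : Perm α} {x : α} (hf : f.IsCycle) (hx : f x ≠ x)
    (hffx : f (f x) = x) : f.support.card = 2 := by
  rw [hf.eq_swap_of_apply_apply_eq_self hx hffx]
  exact card_support_swap (Ne.symm hx)

/-- Every odd cycle of length `n` is a product of `(n-1)/2` three-cycles. -/
lemma oddCycle_threeWord : ∀ n : ℕ, ∀ f : Perm α, f.IsCycle → f.support.card = n → Odd n →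
    ∃ l : List (Perm α), (∀ t ∈ l, IsThreeCycle t) ∧ l.prod = f ∧ 2 * l.length + 1 = n := by
  intro n
  induction n using Nat.strong_induction_on with
  | _ n ih =>
    intro f hf hcard hodd
    obtain ⟨x, hx, -⟩ := id hf
    have h2 : 2 ≤ n := hcard ▸ hf.two_le_card_support
    rw [Nat.odd_iff] at hodd
    have hffx : f (f x) ≠ x := by
      intro h
      have h2' := card_support_eq_two_of hf hx h
      omega
    by_cases h3 : n = 3
    · refine ⟨[f], ?_, by simp, by simp [h3]⟩
      intro t ht
      rw [List.mem_singleton] at ht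
      subst ht
      exact card_support_eq_three_iff.mp (hcard.trans h3)
    · have h5 : 5 ≤ n := by omega
      set g1 := swap x (f x) * f with hg1
      have hg1c : g1.IsCycle := hf.swap_mul hx hffx
      have hg1s : g1.support = f.support \ {x} := support_swap_mul_eq f x hffx
      have hxmem : x ∈ f.support := mem_support.2 hx
      have hg1card : g1.support.card = n - 1 := by
        rw [hg1s, Finset.card_sdiff_of_subset (by simp [hxmem])]
        simp [hcard]
      set y := f x with hy
      have hyx : y ≠ x := hx
      have hg1y : g1 y = f y := by
        rw [hg1, mul_apply]
        exact swap_apply_of_ne_of_ne hffx (fun h => hyx (f.injective h))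
      have hymem : y ∈ f.support := apply_mem_support.2 hxmem
      have hg1y' : g1 y ≠ y := by
        rw [hg1y]
        exact mem_support.1 hymem
      have hgg : g1 (g1 y) ≠ y := by
        intro h
        have h2' := card_support_eq_two_of hg1c hg1y' h
        omega
      set g2 := swap y (g1 y) * g1 with hg2
      have hg2c : g2.IsCycle := hg1c.swap_mul hg1y' hgg
      have hg2s : g2.support = g1.support \ {y} := support_swap_mul_eq g1 y hgg
      have hymem1 : y ∈ g1.support := mem_support.2 hg1y'
      have hg2card : g2.support.card = n - 2 := by
        rw [hg2s, Finset.card_sdiff_of_subset (by simp [hymem1]), hg1card]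
        simp only [Finset.card_singleton]
        omega
      obtain ⟨l, hl3, hlp, hln⟩ := ih (n - 2) (by omega) g2 hg2c hg2card
        (by rw [Nat.odd_iff]; omega)
      refine ⟨(swap x y * swap y (g1 y)) :: l, ?_, ?_, ?_⟩
      · intro t ht
        rcases List.mem_cons.1 ht with rfl | ht
        · rw [swap_comm x y]
          refine isThreeCycle_swap_mul_swap_same hyx (Ne.symm hg1y') ?_
          rw [hg1y]
          exact Ne.symm hffx
        · exact hl3 t ht
      · rw [List.prod_cons, hlp, hg2, mul_assoc, swap_mul_self_mul, hg1, swap_mul_self_mul]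
      · simp only [List.length_cons]
        omega

/-- Every permutation all of whose cycles are odd is a product of
`(cycleType.sum - cycleType.card)/2` three-cycles. -/
lemma oddPerm_threeWord (f : Perm α) (hodd : ∀ c ∈ f.cycleType, Odd c) :
    ∃ l : List (Perm α), (∀ t ∈ l, IsThreeCycle t) ∧ l.prod = f ∧
      2 * l.length + Multiset.card f.cycleType = f.cycleType.sum := by
  revert hodd
  induction f using cycle_induction_on with
  | base_one => exact fun _ => ⟨[], by simp, by simp, by simp⟩
  | base_cycles f hf =>
    intro hodd
    have hodd' : Odd f.support.card := by
      apply hodd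
      rw [hf.cycleType]
      simp
    obtain ⟨l, h3, hp, hn⟩ := oddCycle_threeWord f.support.card f hf rfl hodd'
    refine ⟨l, h3, hp, ?_⟩
    have hs : f.cycleType.sum = f.support.card := sum_cycleType f
    have hc : Multiset.card f.cycleType = 1 := card_cycleType_eq_one.2 hf
    omega
  | induction_disjoint f g hdisj hc ihf ihg =>
    intro hodd
    rw [Equiv.Perm.Disjoint.cycleType_mul hdisj] at hodd ⊢
    obtain ⟨l1, h13, h1p, h1n⟩ := ihf (fun c hc => hodd c (Multiset.mem_add.2 (Or.inl hc)))
    obtain ⟨l2, h23, h2p, h2n⟩ := ihg (fun c hc => hodd c (Multiset.mem_add.2 (Or.inr hc)))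
    refine ⟨l1 ++ l2, ?_, by rw [List.prod_append, h1p, h2p], ?_⟩
    · intro t ht
      rcases List.mem_append.1 ht with ht | ht
      · exact h13 t ht
      · exact h23 t ht
    · simp only [List.length_append, Multiset.card_add, Multiset.sum_add]
      omega

/-- Every three-cycle is a product of two transpositions. -/
lemma threeCycle_eq_two_swaps {t : Perm α} (ht : IsThreeCycle t) :
    ∃ a b : Perm α, IsSwap a ∧ IsSwap b ∧ a * b = t := by
  obtain ⟨x, hx, -⟩ := ht.isCycle
  have h3 := ht.card_support
  have hffx : t (t x) ≠ x := by
    intro h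
    have := card_support_eq_two_of ht.isCycle hx h
    omega
  refine ⟨swap x (t x), swap x (t x) * t, ⟨x, t x, Ne.symm hx, rfl⟩, ?_, ?_⟩
  · rw [← card_support_eq_two, support_swap_mul_eq t x hffx,
      Finset.card_sdiff_of_subset (by simp [mem_support.2 hx])]
    simp [h3]
  · rw [swap_mul_self_mul]

lemma threeWord_to_swapWord : ∀ l : List (Perm α), (∀ t ∈ l, IsThreeCycle t) →
    ∃ l2 : List (Perm α), (∀ t ∈ l2, IsSwap t) ∧ l2.prod = l.prod ∧ l2.length = 2 * l.length := by
  intro l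
  induction l with
  | nil => exact fun _ => ⟨[], by simp, by simp, by simp⟩
  | cons t l ih =>
    intro h3
    obtain ⟨a, b, ha, hb, hab⟩ := threeCycle_eq_two_swaps (h3 t List.mem_cons_self)
    obtain ⟨l2, h2s, h2p, h2n⟩ := ih (fun s hs => h3 s (List.mem_cons_of_mem _ hs))
    refine ⟨a :: b :: l2, ?_, ?_, by simp [h2n]; omega⟩
    · intro s hs
      rcases List.mem_cons.1 hs with rfl | hs
      · exact ha
      rcases List.mem_cons.1 hs with rfl | hs
      · exact hb
      · exact h2s s hs
    · rw [List.prod_cons, List.prod_cons, h2p, List.prod_cons, ← mul_assoc, hab]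

/-! ### The lower bound for transposition length, via fixed subspaces -/

/-- The subspace of functions invariant under a permutation. -/
def fixedPts (σ : Perm α) : Submodule ℝ (α → ℝ) where
  carrier := {v | ∀ i, v (σ i) = v i}
  add_mem' := fun ha hb i => by simp only [Pi.add_apply, ha i, hb i]
  zero_mem' := fun i => rfl
  smul_mem' := fun c v hv i => by simp only [Pi.smul_apply, hv i]

lemma mem_fixedPts {σ : Perm α} {v : α → ℝ} : v ∈ fixedPts σ ↔ ∀ i, v (σ i) = v i := Iff.rfl

lemma fixedPts_one : fixedPts (1 : Perm α) = ⊤ := by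
  ext v; simp [mem_fixedPts]

lemma fixedPts_inf_le (σ τ : Perm α) : fixedPts σ ⊓ fixedPts τ ≤ fixedPts (σ * τ) := by
  rintro v ⟨h1, h2⟩ i
  rw [mul_apply, h1 (τ i), h2 i]

lemma card_le_finrank_fixed_swap {a b : α} (hab : a ≠ b) :
    Fintype.card α ≤ Module.finrank ℝ (fixedPts (swap a b)) + 1 := by
  set φ : (α → ℝ) →ₗ[ℝ] ℝ :=
    (LinearMap.proj a : (α → ℝ) →ₗ[ℝ] ℝ) - (LinearMap.proj b : (α → ℝ) →ₗ[ℝ] ℝ) with hφ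
  have hker : LinearMap.ker φ ≤ fixedPts (swap a b) := by
    intro v hv i
    have hv' : v a = v b := by
      have := LinearMap.mem_ker.1 hv
      simpa [hφ, sub_eq_zero] using this
    rcases eq_or_ne i a with rfl | hia
    · rw [swap_apply_left, hv']
    rcases eq_or_ne i b with rfl | hib
    · rw [swap_apply_right, hv']
    · rw [swap_apply_of_ne_of_ne hia hib]
  have h1 : Module.finrank ℝ (LinearMap.ker φ) ≤ Module.finrank ℝ (fixedPts (swap a b)) :=
    Submodule.finrank_mono hker
  have h2 := LinearMap.finrank_range_add_finrank_ker φ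
  have h3 : Module.finrank ℝ (LinearMap.range φ) ≤ 1 :=
    (Submodule.finrank_le _).trans_eq (Module.finrank_self ℝ)
  have h4 : Module.finrank ℝ (α → ℝ) = Fintype.card α := by
    simp [Module.finrank_pi]
  omega

lemma card_le_finrank_wordBound : ∀ l : List (Perm α), (∀ t ∈ l, IsSwap t) →
    Fintype.card α ≤ Module.finrank ℝ (fixedPts l.prod) + l.length := by
  intro l
  induction l with
  | nil =>
    intro _
    rw [List.prod_nil, fixedPts_one, List.length_nil]
    simp [finrank_top, Module.finrank_pi]
  | cons t l ih =>
    intro hmem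
    obtain ⟨a, b, hab, ht⟩ := hmem t List.mem_cons_self
    have h1 := card_le_finrank_fixed_swap hab
    have h2 := ih (fun s hs => hmem s (List.mem_cons_of_mem _ hs))
    have h3 := Submodule.finrank_sup_add_finrank_inf_eq (fixedPts (swap a b)) (fixedPts l.prod)
    have h4 : Module.finrank ℝ ↥(fixedPts (swap a b) ⊔ fixedPts l.prod) ≤ Fintype.card α := by
      refine (Submodule.finrank_le _).trans_eq ?_
      simp [Module.finrank_pi]
    have h5 : Module.finrank ℝ ↥(fixedPts (swap a b) ⊓ fixedPts l.prod) ≤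
        Module.finrank ℝ (fixedPts (t * l.prod)) := by
      rw [ht]
      exact Submodule.finrank_mono (fixedPts_inf_le _ _)
    simp only [List.prod_cons, List.length_cons]
    change Fintype.card α ≤ Module.finrank ℝ ↥(fixedPts (t * l.prod)) + (l.length + 1)
    omega

lemma fixed_constant {σ : Perm α} {v : α → ℝ} (hv : v ∈ fixedPts σ) {i j : α}
    (hij : σ.SameCycle i j) : v i = v j := by
  obtain ⟨k, rfl⟩ := hij
  suffices h : ∀ k : ℤ, v ((σ ^ k) i) = v i by exact (h k).symm
  intro k
  induction k using Int.induction_on with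
  | zero => simp
  | succ k ihk =>
    have hstep : (σ ^ ((k : ℤ) + 1)) i = σ ((σ ^ (k : ℤ)) i) := by
      rw [show (k : ℤ) + 1 = 1 + k by ring, zpow_add, zpow_one, mul_apply]
    rw [hstep, hv ((σ ^ (k : ℤ)) i), ihk]
  | pred k ihk =>
    have hstep : (σ ^ (-(k : ℤ) - 1)) i = σ⁻¹ ((σ ^ (-(k : ℤ))) i) := by
      rw [show -(k : ℤ) - 1 = -1 + -k by ring, zpow_add, zpow_neg_one, mul_apply]
    rw [hstep]
    have := hv (σ⁻¹ ((σ ^ (-(k : ℤ))) i))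
    rw [← mul_apply, mul_inv_cancel, one_apply] at this
    rw [← this, ihk]

/-- The setoid on `α` given by being in the same cycle of `σ`. -/
def sameCycleSetoid (σ : Perm α) : Setoid α :=
  ⟨σ.SameCycle, ⟨SameCycle.refl σ, fun h => h.symm, fun h1 h2 => h1.trans h2⟩⟩

lemma finrank_fixed_le (σ : Perm α) :
    Module.finrank ℝ (fixedPts σ) + σ.cycleType.sum ≤
      Fintype.card α + Multiset.card σ.cycleType := by
  classical
  letI st := sameCycleSetoid σ
  haveI : Fintype (Quotient st) :=
    Fintype.ofSurjective (fun a : α => (⟦a⟧ : Quotient st)) (fun q => ⟨q.out, q.out_eq⟩)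
  have hsame : ∀ i : α, σ.SameCycle i (Quotient.mk st i).out := by
    intro i
    exact Quotient.exact ((Quotient.mk st i).out_eq.symm)
  let Φ : fixedPts σ →ₗ[ℝ] (Quotient st → ℝ) :=
    { toFun := fun v q => v.1 q.out
      map_add' := fun v w => rfl
      map_smul' := fun c v => rfl }
  have hinj : Function.Injective Φ := by
    intro v w hvw
    ext i
    have h1 : v.1 i = v.1 (Quotient.mk st i).out := fixed_constant v.2 (hsame i)
    have h2 : w.1 i = w.1 (Quotient.mk st i).out := fixed_constant w.2 (hsame i)
    rw [h1, h2]
    exact congrFun hvw (Quotient.mk st i)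
  have hrank : Module.finrank ℝ (fixedPts σ) ≤ Fintype.card (Quotient st) := by
    have := LinearMap.finrank_le_finrank_of_injective hinj
    simpa [Module.finrank_pi] using this
  -- injection from the quotient into fixed points plus cycles
  let ψ : Quotient st → {a : α // a ∉ σ.support} ⊕ {c // c ∈ σ.cycleFactorsFinset} := fun q =>
    if h : q.out ∈ σ.support then
      Sum.inr ⟨σ.cycleOf q.out, cycleOf_mem_cycleFactorsFinset_iff.2 h⟩
    else Sum.inl ⟨q.out, h⟩
  have hψ : Function.Injective ψ := by
    intro q q' hqq
    simp only [ψ] at hqq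
    split_ifs at hqq with h h' h'
    · have hcyc : σ.cycleOf q.out = σ.cycleOf q'.out := by
        simpa using hqq
      have hmem' : q'.out ∈ (σ.cycleOf q.out).support := by
        rw [hcyc]
        exact mem_support_cycleOf_iff.2 ⟨SameCycle.refl σ _, h'⟩
      have hsc : σ.SameCycle q.out q'.out := (mem_support_cycleOf_iff.1 hmem').1
      rw [← q.out_eq, ← q'.out_eq]
      exact Quotient.sound hsc
    all_goals simp_all
  have hcardQ : Fintype.card (Quotient st) ≤
      (Fintype.card α - σ.support.card) + σ.cycleFactorsFinset.card := by
    have h := Fintype.card_le_of_injective ψ hψ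
    rw [Fintype.card_sum] at h
    have e1 : Fintype.card {a : α // a ∉ σ.support} = Fintype.card α - σ.support.card := by
      rw [Fintype.card_of_subtype σ.supportᶜ (by simp), Finset.card_compl]
    have e2 : Fintype.card {c // c ∈ σ.cycleFactorsFinset} = σ.cycleFactorsFinset.card :=
      Fintype.card_of_subtype _ (fun _ => Iff.rfl)
    rw [e1, e2] at h
    exact h
  have hsum : σ.cycleType.sum = σ.support.card := sum_cycleType σ
  have hcardCT : Multiset.card σ.cycleType = σ.cycleFactorsFinset.card := by
    rw [cycleType_def, Multiset.card_map]
    rfl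
  have hsupp : σ.support.card ≤ Fintype.card α := Finset.card_le_univ _
  omega

/-- The key lower bound: any word of transpositions representing `σ` has length at least
`cycleType.sum - cycleType.card`. -/
lemma swapWord_bound {σ : Perm α} {l : List (Perm α)} (hs : ∀ t ∈ l, IsSwap t)
    (hp : l.prod = σ) :
    σ.cycleType.sum ≤ Multiset.card σ.cycleType + l.length := by
  have h1 := card_le_finrank_wordBound l hs
  rw [hp] at h1
  have h2 := finrank_fixed_le σ
  omega

end Perms

theorem stmt7 (N : ℕ) (x y : Perm (Fin N))
    (hx : x ∈ alternatingGroup (Fin N)) (hy : y ∈ alternatingGroup (Fin N))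
    (hxo : ∀ c ∈ x.cycleType, Odd c) (hyo : ∀ c ∈ y.cycleType, Odd c)
    (h : leT (threeCycles N) x y) : leT (transpositions N) x y := by
  set z := x⁻¹ * y with hz
  -- three-cycle words for x, y
  obtain ⟨lx, hlx3, hlxp, hlxn⟩ := oddPerm_threeWord x hxo
  obtain ⟨ly, hly3, hlyp, hlyn⟩ := oddPerm_threeWord y hyo
  -- a three-cycle word for z
  have hzword : ∃ lz : List (Perm (Fin N)), (∀ t ∈ lz, IsThreeCycle t) ∧ lz.prod = z := by
    refine ⟨(lx.map fun t => t⁻¹).reverse ++ ly, ?_, ?_⟩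
    · intro t ht
      rcases List.mem_append.1 ht with ht | ht
      · rw [List.mem_reverse, List.mem_map] at ht
        obtain ⟨s, hs, rfl⟩ := ht
        exact (hlx3 s hs).inv
      · exact hly3 t ht
    · rw [List.prod_append, ← List.prod_inv_reverse, hlxp, hlyp]
  obtain ⟨lz, hlz3, hlzp⟩ := hzword
  -- minimal three-cycle words
  obtain ⟨mx, hmx3, hmxp, hmxn⟩ := exists_min_word (T := threeCycles N) hlx3 hlxp
  obtain ⟨mz, hmz3, hmzp, hmzn⟩ := exists_min_word (T := threeCycles N) hlz3 hlzp
  -- ℓ₃ y ≤ ly.length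
  have h3y : lenT (threeCycles N) y ≤ ly.length := lenT_le hly3 hlyp
  -- convert three-cycle words to swap words
  obtain ⟨sx, hsx, hsxp, hsxn⟩ := threeWord_to_swapWord mx hmx3
  obtain ⟨sz, hsz, hszp, hszn⟩ := threeWord_to_swapWord mz hmz3
  obtain ⟨sy, hsy, hsyp, hsyn⟩ := threeWord_to_swapWord ly hly3
  rw [hmxp] at hsxp
  rw [hmzp] at hszp
  rw [hlyp] at hsyp
  -- ℓ₂ x, ℓ₂ z upper bounds
  have h2x : lenT (transpositions N) x ≤ 2 * lenT (threeCycles N) x := by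
    have := lenT_le (T := transpositions N) hsx hsxp
    omega
  have h2z : lenT (transpositions N) z ≤ 2 * lenT (threeCycles N) z := by
    have := lenT_le (T := transpositions N) hsz hszp
    omega
  -- minimal swap words for x and z, subadditivity
  obtain ⟨nx, hnx, hnxp, hnxn⟩ := exists_min_word (T := transpositions N) hsx hsxp
  obtain ⟨nz, hnz, hnzp, hnzn⟩ := exists_min_word (T := transpositions N) hsz hszp
  have hsubadd : lenT (transpositions N) y ≤
      lenT (transpositions N) x + lenT (transpositions N) z := by
    have hprod : (nx ++ nz).prod = y := by
      rw [List.prod_append, hnxp, hnzp, hz, mul_inv_cancel_left]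
    have hmem : ∀ t ∈ nx ++ nz, t ∈ transpositions N := by
      intro t ht
      rcases List.mem_append.1 ht with ht | ht
      · exact hnx t ht
      · exact hnz t ht
    have := lenT_le hmem hprod
    simp only [List.length_append] at this
    omega
  -- the lower bound for ℓ₂ y
  obtain ⟨ny, hny, hnyp, hnyn⟩ := exists_min_word (T := transpositions N) hsy hsyp
  have hlow : y.cycleType.sum ≤ Multiset.card y.cycleType + lenT (transpositions N) y := by
    have := swapWord_bound hny hnyp
    omega
  -- combine
  rw [leT] at h ⊢
  rw [← hz] at h ⊢
  omega
end

section
/- Fix a positive integer r and integers a_1,...,a_r, b, n, with a = a_1 + ... + a_r. Then Σ over (n_1,...,n_r) of nonnegative integers with n_1+...+n_r = n of Π_{i=1}^r [a_i/(a_i + b n_i)] C(a_i + b n_i, n_i) equals [a/(a+bn)] C(a+bn, n) (a multi-parameter Rothe–Hagen identity). -/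
open Finset


/-- Gould polynomial `A_k(x) = x (x+bk-1)⋯(x+bk-k+1)/k!`. -/
noncomputable def A (b : ℚ) : ℕ → ℚ → ℚ
  | 0, _ => 1
  | k+1, x => x * (∏ j ∈ Finset.range k, (x + b*(k+1) - (j+1))) / (Nat.factorial (k+1) : ℚ)

lemma A_zero (b x : ℚ) : A b 0 x = 1 := rfl

lemma A_succ (b x : ℚ) (k : ℕ) :
    A b (k+1) x = x * (∏ j ∈ Finset.range k, (x + b*(k+1) - (j+1))) / (Nat.factorial (k+1) : ℚ) :=
  rfl

lemma A_apply_zero (b : ℚ) (k : ℕ) : A b (k+1) 0 = 0 := by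
  simp [A_succ]

lemma Arec (b : ℚ) (k : ℕ) (x : ℚ) :
    A b (k+1) x = A b (k+1) (x-1) + A b k (x+b-1) := by
  cases k with
  | zero => simp [A_succ, A_zero]
  | succ j =>
    have hfac : ((j+1).factorial : ℚ) ≠ 0 := Nat.cast_ne_zero.mpr (Nat.factorial_ne_zero _)
    rw [A_succ, A_succ, A_succ]
    push_cast
    rw [Finset.prod_range_succ' (fun i => x + b*(j+1+1) - (i+1)) j]
    rw [Finset.prod_range_succ (fun i => (x-1) + b*(j+1+1) - (i+1)) j]
    have h1 : (∏ i ∈ Finset.range j, (x + b*(j+1+1) - ((i:ℚ)+1+1)))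
        = ∏ i ∈ Finset.range j, (x + b*(j+1+1) - ((i:ℚ)+2)) :=
      Finset.prod_congr rfl (fun i _ => by ring)
    have h2 : (∏ i ∈ Finset.range j, ((x-1) + b*(j+1+1) - ((i:ℚ)+1)))
        = ∏ i ∈ Finset.range j, (x + b*(j+1+1) - ((i:ℚ)+2)) :=
      Finset.prod_congr rfl (fun i _ => by ring)
    have h3 : (∏ i ∈ Finset.range j, ((x+b-1) + b*(j+1) - ((i:ℚ)+1)))
        = ∏ i ∈ Finset.range j, (x + b*(j+1+1) - ((i:ℚ)+2)) :=
      Finset.prod_congr rfl (fun i _ => by ring)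
    push_cast at h1 h2 h3 ⊢
    rw [h1, h2, h3]
    have hfac2 : ((j+2).factorial : ℚ) = (j+2) * ((j+1).factorial : ℚ) := by
      rw [show j+2 = (j+1)+1 from rfl, Nat.factorial_succ]; push_cast; ring
    rw [show ((j + 1 + 1 : ℕ).factorial : ℚ) = ((j+2).factorial : ℚ) by norm_num, hfac2]
    field_simp
    ring

lemma sum_step (b : ℚ) (n : ℕ) (x y : ℚ) :
    ∑ k ∈ range (n+2), A b k x * A b (n+1-k) y
      = (∑ k ∈ range (n+2), A b k (x-1) * A b (n+1-k) y)
        + ∑ k ∈ range (n+1), A b k (x+b-1) * A b (n-k) y := by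
  rw [Finset.sum_range_succ' (fun k => A b k x * A b (n+1-k) y) (n+1),
      Finset.sum_range_succ' (fun k => A b k (x-1) * A b (n+1-k) y) (n+1)]
  simp only [Nat.succ_sub_succ, Nat.sub_zero]
  have h : ∀ k ∈ range (n+1), A b (k+1) x * A b (n-k) y
      = A b (k+1) (x-1) * A b (n-k) y + A b k (x+b-1) * A b (n-k) y := by
    intro k _; rw [Arec]; ring
  rw [Finset.sum_congr rfl h, Finset.sum_add_distrib, A_zero, A_zero]
  ring

lemma conv (b : ℤ) : ∀ n : ℕ, ∀ (x : ℤ) (y : ℚ),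
    ∑ k ∈ range (n+1), A (b:ℚ) k (x:ℚ) * A (b:ℚ) (n-k) y = A (b:ℚ) n ((x:ℚ) + y) := by
  intro n
  induction n with
  | zero => intro x y; simp [A_zero]
  | succ n ih =>
    intro x
    induction x using Int.induction_on with
    | zero =>
      intro y
      rw [Finset.sum_range_succ' (fun k => A (b:ℚ) k ((0:ℤ):ℚ) * A (b:ℚ) (n+1-k) y) (n+1)]
      simp [A_apply_zero, A_zero]
    | succ m ihm =>
      intro y
      have hs := sum_step (b:ℚ) n ((m:ℚ)+1) y
      have e1 : ((m:ℚ)+1) - 1 = (((m:ℤ)):ℚ) := by push_cast; ring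
      have e2 : ((m:ℚ)+1) + b - 1 = (((m+b:ℤ)):ℚ) := by push_cast; ring
      rw [e1, e2, ih (m+b) y, ihm y] at hs
      have e3 : (((m+1:ℤ)):ℚ) = (m:ℚ)+1 := by push_cast; ring
      rw [e3]
      rw [show n+1+1 = n+2 from rfl, hs]
      have := Arec (b:ℚ) n ((m:ℚ)+1+y)
      have e4 : (m:ℚ)+1+y-1 = (m:ℚ)+y := by ring
      have e5 : (m:ℚ)+1+y+b-1 = (((m+b:ℤ)):ℚ)+y := by push_cast; ring
      have e6 : (((m:ℤ)):ℚ)+y = (m:ℚ)+y := by push_cast; ring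
      rw [e4, e5, ← e6] at this
      linarith [this]
    | pred m ihm =>
      intro y
      have hs := sum_step (b:ℚ) n (-(m:ℚ)) y
      have e1 : (-(m:ℚ)) - 1 = (((-(m:ℤ)-1:ℤ)):ℚ) := by push_cast; ring
      have e2 : (-(m:ℚ)) + b - 1 = (((-(m:ℤ)+b-1:ℤ)):ℚ) := by push_cast; ring
      have e0 : (-(m:ℚ)) = (((-(m:ℤ)):ℤ):ℚ) := by push_cast; ring
      rw [e1, e2, ih (-(m:ℤ)+b-1) y] at hs
      rw [e0, ihm y] at hs
      rw [show n+1+1 = n+2 from rfl]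
      have harec := Arec (b:ℚ) n (-(m:ℚ)+y)
      have e4 : -(m:ℚ)+y-1 = (((-(m:ℤ)-1:ℤ)):ℚ)+y := by push_cast; ring
      have e5 : -(m:ℚ)+y+b-1 = (((-(m:ℤ)+b-1:ℤ)):ℚ)+y := by push_cast; ring
      have e6 : (((-(m:ℤ)):ℤ):ℚ)+y = -(m:ℚ)+y := by push_cast; ring
      rw [e4, e5, ← e6] at harec
      linarith [hs, harec]


/-- The generalized binomial coefficient `C(x, k) = x(x-1)⋯(x-k+1)/k!` for `x : ℚ`. -/
noncomputable def qchoose (x : ℚ) (k : ℕ) : ℚ :=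
  (∏ j ∈ Finset.range k, (x - j)) / (Nat.factorial k : ℚ)

lemma sum_tuple_succ {M : Type*} [AddCommMonoid M] (r n : ℕ) (F : (Fin (r+1) → ℕ) → M) :
    ∑ g ∈ Finset.Nat.antidiagonalTuple (r+1) n, F g
      = ∑ p ∈ Finset.HasAntidiagonal.antidiagonal n,
          ∑ g ∈ Finset.Nat.antidiagonalTuple r p.2, F (Fin.cons p.1 g) := by
  rw [← Finset.sum_sigma (Finset.HasAntidiagonal.antidiagonal n)
      (fun p => Finset.Nat.antidiagonalTuple r p.2) (fun pg => F (Fin.cons pg.1.1 pg.2))]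
  refine Finset.sum_nbij' (i := fun g => ⟨(g 0, ∑ i, Fin.tail g i), Fin.tail g⟩)
    (j := fun pg => Fin.cons pg.1.1 pg.2) ?_ ?_ ?_ ?_ ?_
  · intro g hg
    rw [Finset.Nat.mem_antidiagonalTuple] at hg
    rw [Finset.mem_sigma]
    constructor
    · rw [Finset.HasAntidiagonal.mem_antidiagonal]
      rw [← hg, Fin.sum_univ_succ]; rfl
    · exact Finset.Nat.mem_antidiagonalTuple.mpr rfl
  · intro pg hpg
    rw [Finset.mem_sigma] at hpg
    rw [Finset.Nat.mem_antidiagonalTuple, Fin.sum_cons,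
        Finset.Nat.mem_antidiagonalTuple.mp hpg.2]
    exact Finset.HasAntidiagonal.mem_antidiagonal.mp hpg.1
  · intro g _; exact Fin.cons_self_tail g
  · intro pg hpg
    rw [Finset.mem_sigma] at hpg
    have h2 := Finset.Nat.mem_antidiagonalTuple.mp hpg.2
    have h1 := Finset.HasAntidiagonal.mem_antidiagonal.mp hpg.1
    refine Sigma.ext ?_ ?_
    · simp [Fin.tail_cons, h2]
    · simp [Fin.tail_cons]
  · intro g _; rw [Fin.cons_self_tail]

lemma multi (b : ℤ) : ∀ r (a : Fin r → ℤ) (n : ℕ),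
    ∑ f ∈ Finset.Nat.antidiagonalTuple r n, ∏ i, A (b:ℚ) (f i) ((a i : ℚ))
      = A (b:ℚ) n (((∑ i, a i : ℤ)) : ℚ) := by
  intro r
  induction r with
  | zero =>
    intro a n
    cases n with
    | zero => simp [A_zero]
    | succ n => simp [A_apply_zero]
  | succ r ih =>
    intro a n
    rw [sum_tuple_succ r n (fun f => ∏ i, A (b:ℚ) (f i) ((a i : ℚ)))]
    have hinner : ∀ p ∈ Finset.HasAntidiagonal.antidiagonal n,
        (∑ g ∈ Finset.Nat.antidiagonalTuple r (p:ℕ×ℕ).2,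
          ∏ i, A (b:ℚ) ((Fin.cons p.1 g : Fin (r+1) → ℕ) i) ((a i : ℚ)))
        = A (b:ℚ) p.1 ((a 0 : ℚ)) * A (b:ℚ) p.2 (((∑ i : Fin r, a i.succ : ℤ)) : ℚ) := by
      intro p _
      rw [← ih (fun i => a i.succ) p.2, Finset.mul_sum]
      apply Finset.sum_congr rfl
      intro g _
      rw [Fin.prod_univ_succ]
      simp [Fin.cons_zero, Fin.cons_succ]
    rw [Finset.sum_congr rfl hinner, Finset.Nat.sum_antidiagonal_eq_sum_range_succ_mk]
    rw [conv b n (a 0) (((∑ i : Fin r, a i.succ : ℤ)) : ℚ)]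
    rw [show ((a 0 : ℚ)) + (((∑ i : Fin r, a i.succ : ℤ)) : ℚ) = (((∑ i, a i : ℤ)) : ℚ) by
      rw [Fin.sum_univ_succ]; push_cast; ring]

lemma qA (b x : ℚ) (k : ℕ) (h : x + b*k ≠ 0) :
    x / (x + b*k) * qchoose (x + b*k) k = A b k x := by
  cases k with
  | zero =>
    simp only [Nat.cast_zero, mul_zero, add_zero] at h ⊢
    simp [qchoose, A_zero, div_self h]
  | succ j =>
    rw [qchoose, A_succ]
    push_cast at h ⊢
    rw [Finset.prod_range_succ' (fun i => x + b*((j:ℚ)+1) - (i:ℚ)) j]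
    push_cast
    field_simp
    ring


/-- Multi-parameter Rothe–Hagen identity. -/
theorem stmt16 (r : ℕ) (hr : 0 < r) (a : Fin r → ℤ) (b : ℤ) (n : ℕ)
    (hden : ∀ (i : Fin r) (k : ℕ), k ≤ n → (a i : ℚ) + (b : ℚ) * k ≠ 0)
    (hden' : ((∑ i, a i : ℤ) : ℚ) + (b : ℚ) * n ≠ 0) :
    ∑ f ∈ Finset.Nat.antidiagonalTuple r n,
      ∏ i, ((a i : ℚ) / ((a i : ℚ) + (b : ℚ) * f i))
        * qchoose ((a i : ℚ) + (b : ℚ) * f i) (f i)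
    = (((∑ i, a i : ℤ) : ℚ) / (((∑ i, a i : ℤ) : ℚ) + (b : ℚ) * n))
        * qchoose (((∑ i, a i : ℤ) : ℚ) + (b : ℚ) * n) n := by
  have hstep : ∀ f ∈ Finset.Nat.antidiagonalTuple r n,
      (∏ i, ((a i : ℚ) / ((a i : ℚ) + (b : ℚ) * f i))
        * qchoose ((a i : ℚ) + (b : ℚ) * f i) (f i))
      = ∏ i, A (b:ℚ) (f i) ((a i : ℚ)) := by
    intro f hf
    apply Finset.prod_congr rfl
    intro i _
    have hfi : f i ≤ n := by
      rw [Finset.Nat.mem_antidiagonalTuple] at hf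
      calc f i ≤ ∑ j, f j := Finset.single_le_sum (fun j _ => Nat.zero_le _) (Finset.mem_univ i)
        _ = n := hf
    exact qA (b:ℚ) ((a i : ℚ)) (f i) (hden i (f i) hfi)
  rw [Finset.sum_congr rfl hstep, multi b r a n, ← qA (b:ℚ) (((∑ i, a i : ℤ)) : ℚ) n hden']
end
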